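/- arXiv:2003.03523 — 9 statements merged into one kernel-verified Lean document; each statement's English description precedes it below -/
import Mathlib

section
/- Fix an integer k ≥ 0. Let λ ∈ (0,1], let R ∈ ℝ^{n×n} be positive definite, let θ_0 ∈ ℝ^n, and for all i ≥ 0 let φ_i ∈ ℝ^{p×n} and y_i ∈ ℝ^p. Define P_0 := R^{-1} and, for all i ≥ 0, P_{i+1} := (1/λ)P_i − (1/λ)P_i φ_i^T (λ I_p + φ_i P_i φ_i^T)^{-1} φ_i P_i and θ_{i+1} := θ_i + P_{i+1} φ_i^T (y_i − φ_i θ_i). Then θ_{k+1} is the unique global minimizer over θ̂ ∈ ℝ^n of the cost J_k(θ̂). -/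
open Matrix

/-- The RLS cost function `J_k` with forgetting factor `lam`,
regularization `R`, and initial estimate `θ0`. -/
noncomputable def Jcost {n p : ℕ} (k : ℕ) (lam : ℝ) (R : Matrix (Fin n) (Fin n) ℝ)
    (θ0 : Fin n → ℝ) (φ : ℕ → Matrix (Fin p) (Fin n) ℝ) (y : ℕ → (Fin p → ℝ))
    (t : Fin n → ℝ) : ℝ :=
  (∑ i ∈ Finset.range (k + 1),
      lam ^ (k - i) * ((y i - φ i *ᵥ t) ⬝ᵥ (y i - φ i *ᵥ t)))
    + lam ^ (k + 1) * ((t - θ0) ⬝ᵥ (R *ᵥ (t - θ0)))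

namespace RLSAux

/-- Information matrix recursion. -/
noncomputable def Mrec {n p : ℕ} (lam : ℝ) (R : Matrix (Fin n) (Fin n) ℝ)
    (φ : ℕ → Matrix (Fin p) (Fin n) ℝ) : ℕ → Matrix (Fin n) (Fin n) ℝ
  | 0 => R
  | (i + 1) => lam • Mrec lam R φ i + (φ i)ᵀ * φ i

/-- Right-hand-side vector recursion. -/
noncomputable def crec {n p : ℕ} (lam : ℝ) (R : Matrix (Fin n) (Fin n) ℝ) (θ0 : Fin n → ℝ)
    (φ : ℕ → Matrix (Fin p) (Fin n) ℝ) (y : ℕ → (Fin p → ℝ)) : ℕ → (Fin n → ℝ)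
  | 0 => R *ᵥ θ0
  | (i + 1) => lam • crec lam R θ0 φ y i + (φ i)ᵀ *ᵥ y i

/-- Constant-term recursion. -/
noncomputable def erec {n p : ℕ} (lam : ℝ) (R : Matrix (Fin n) (Fin n) ℝ) (θ0 : Fin n → ℝ)
    (y : ℕ → (Fin p → ℝ)) : ℕ → ℝ
  | 0 => y 0 ⬝ᵥ y 0 + lam * (θ0 ⬝ᵥ (R *ᵥ θ0))
  | (k + 1) => lam * erec lam R θ0 y k + y (k + 1) ⬝ᵥ y (k + 1)

lemma posdef_smul {m : ℕ} {A : Matrix (Fin m) (Fin m) ℝ} (hA : A.PosDef) {c : ℝ}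
    (hc : 0 < c) : (c • A).PosDef := by
  refine Matrix.PosDef.of_dotProduct_mulVec_pos ?_ fun x hx => ?_
  · have h := hA.isHermitian
    unfold Matrix.IsHermitian at *
    rw [conjTranspose_smul, h]
    simp
  · rw [smul_mulVec, dotProduct_smul, smul_eq_mul]
    exact mul_pos hc (hA.dotProduct_mulVec_pos hx)

lemma posSemidef_transpose_mul_self' {m q : ℕ} (A : Matrix (Fin q) (Fin m) ℝ) :
    (Aᵀ * A).PosSemidef := by
  have h := Matrix.posSemidef_conjTranspose_mul_self A
  rwa [conjTranspose_eq_transpose_of_trivial] at h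

lemma posSemidef_sandwich {m q : ℕ} {A : Matrix (Fin m) (Fin m) ℝ} (hA : A.PosSemidef)
    (B : Matrix (Fin q) (Fin m) ℝ) : (B * A * Bᵀ).PosSemidef := by
  have h := hA.mul_mul_conjTranspose_same B
  rwa [conjTranspose_eq_transpose_of_trivial] at h

/-- The Woodbury-type step: the `P` recursion produces a left inverse of the
information-matrix recursion. -/
lemma woodbury {n p : ℕ} {lam : ℝ} (hlam : 0 < lam) (A : Matrix (Fin p) (Fin n) ℝ)
    {Pi Mi : Matrix (Fin n) (Fin n) ℝ} (hPM : Pi * Mi = 1)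
    (hS : ((lam • (1 : Matrix (Fin p) (Fin p) ℝ) + A * Pi * Aᵀ)⁻¹ *
        (lam • (1 : Matrix (Fin p) (Fin p) ℝ) + A * Pi * Aᵀ)) = 1) :
    ((1 / lam) • Pi -
        (1 / lam) • (Pi * Aᵀ * (lam • (1 : Matrix (Fin p) (Fin p) ℝ) + A * Pi * Aᵀ)⁻¹ *
          (A * Pi))) * (lam • Mi + Aᵀ * A) = 1 := by
  set S : Matrix (Fin p) (Fin p) ℝ := lam • (1 : Matrix (Fin p) (Fin p) ℝ) + A * Pi * Aᵀ with hSdef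
  have h1 : Pi * (lam • Mi + Aᵀ * A) = lam • (1 : Matrix (Fin n) (Fin n) ℝ) + Pi * Aᵀ * A := by
    rw [Matrix.mul_add, Matrix.mul_smul, hPM, ← Matrix.mul_assoc]
  have h2 : A * Pi * (lam • Mi + Aᵀ * A) = S * A := by
    rw [Matrix.mul_add, Matrix.mul_smul, Matrix.mul_assoc A Pi Mi, hPM, Matrix.mul_one, hSdef,
      Matrix.add_mul, Matrix.smul_mul, Matrix.one_mul]
    congr 1
    simp only [Matrix.mul_assoc]
  have h3 : Pi * Aᵀ * S⁻¹ * (A * Pi) * (lam • Mi + Aᵀ * A) = Pi * Aᵀ * A := by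
    rw [Matrix.mul_assoc (Pi * Aᵀ * S⁻¹) (A * Pi) _, h2,
      ← Matrix.mul_assoc (Pi * Aᵀ * S⁻¹) S A, Matrix.mul_assoc (Pi * Aᵀ) S⁻¹ S,
      hS, Matrix.mul_one, Matrix.mul_assoc]
  rw [Matrix.sub_mul, Matrix.smul_mul, Matrix.smul_mul, h1, h3, smul_add, smul_smul,
    one_div, inv_mul_cancel₀ (ne_of_gt hlam), one_smul]
  abel

lemma residual_expand {n p : ℕ} (A : Matrix (Fin p) (Fin n) ℝ) (u : Fin p → ℝ)
    (t : Fin n → ℝ) :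
    (u - A *ᵥ t) ⬝ᵥ (u - A *ᵥ t) =
      t ⬝ᵥ ((Aᵀ * A) *ᵥ t) - 2 * ((Aᵀ *ᵥ u) ⬝ᵥ t) + u ⬝ᵥ u := by
  have h1 : t ⬝ᵥ ((Aᵀ * A) *ᵥ t) = (A *ᵥ t) ⬝ᵥ (A *ᵥ t) := by
    rw [← mulVec_mulVec, dotProduct_mulVec, vecMul_transpose]
  have h2 : (Aᵀ *ᵥ u) ⬝ᵥ t = u ⬝ᵥ (A *ᵥ t) := by
    rw [mulVec_transpose, ← dotProduct_mulVec]
  have h3 : (A *ᵥ t) ⬝ᵥ u = u ⬝ᵥ (A *ᵥ t) := dotProduct_comm _ _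
  rw [dotProduct_sub, sub_dotProduct, sub_dotProduct, h1, h2, h3]
  ring

lemma reg_expand {m : ℕ} {B : Matrix (Fin m) (Fin m) ℝ} (hB : Bᵀ = B) (s t : Fin m → ℝ) :
    (t - s) ⬝ᵥ (B *ᵥ (t - s)) =
      t ⬝ᵥ (B *ᵥ t) - 2 * ((B *ᵥ s) ⬝ᵥ t) + s ⬝ᵥ (B *ᵥ s) := by
  have hsym : s ⬝ᵥ (B *ᵥ t) = (B *ᵥ s) ⬝ᵥ t := by
    rw [dotProduct_mulVec, ← vecMul_transpose, hB]
  have hsym2 : t ⬝ᵥ (B *ᵥ s) = (B *ᵥ s) ⬝ᵥ t := dotProduct_comm _ _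
  rw [mulVec_sub, dotProduct_sub, sub_dotProduct, sub_dotProduct, hsym, hsym2]
  ring

lemma Jcost_succ {n p : ℕ} (k : ℕ) (lam : ℝ) (R : Matrix (Fin n) (Fin n) ℝ)
    (θ0 : Fin n → ℝ) (φ : ℕ → Matrix (Fin p) (Fin n) ℝ) (y : ℕ → (Fin p → ℝ))
    (t : Fin n → ℝ) :
    Jcost (k + 1) lam R θ0 φ y t =
      lam * Jcost k lam R θ0 φ y t +
        (y (k + 1) - φ (k + 1) *ᵥ t) ⬝ᵥ (y (k + 1) - φ (k + 1) *ᵥ t) := by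
  unfold Jcost
  rw [Finset.sum_range_succ, Nat.sub_self, pow_zero, one_mul]
  have hsum : (∑ i ∈ Finset.range (k + 1),
      lam ^ (k + 1 - i) * ((y i - φ i *ᵥ t) ⬝ᵥ (y i - φ i *ᵥ t)))
      = lam * ∑ i ∈ Finset.range (k + 1),
          lam ^ (k - i) * ((y i - φ i *ᵥ t) ⬝ᵥ (y i - φ i *ᵥ t)) := by
    rw [Finset.mul_sum]
    refine Finset.sum_congr rfl fun i hi => ?_
    have hik : i ≤ k := Nat.lt_succ_iff.mp (Finset.mem_range.mp hi)
    rw [Nat.succ_sub hik, pow_succ]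
    ring
  rw [hsum]
  ring

end RLSAux

open RLSAux in
theorem stmt0 {n p : ℕ} (k : ℕ) (lam : ℝ) (hlam : lam ∈ Set.Ioc (0 : ℝ) 1)
    (R : Matrix (Fin n) (Fin n) ℝ) (hR : R.PosDef)
    (θ0 : Fin n → ℝ) (φ : ℕ → Matrix (Fin p) (Fin n) ℝ) (y : ℕ → (Fin p → ℝ))
    (P : ℕ → Matrix (Fin n) (Fin n) ℝ) (θ : ℕ → (Fin n → ℝ))
    (hP0 : P 0 = R⁻¹) (hθ0 : θ 0 = θ0)
    (hP : ∀ i, P (i + 1) =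
      (1 / lam) • P i -
      (1 / lam) • (P i * (φ i)ᵀ *
        (lam • (1 : Matrix (Fin p) (Fin p) ℝ) + φ i * P i * (φ i)ᵀ)⁻¹ * (φ i * P i)))
    (hθ : ∀ i, θ (i + 1) = θ i + (P (i + 1) * (φ i)ᵀ) *ᵥ (y i - φ i *ᵥ θ i)) :
    (∀ t, Jcost k lam R θ0 φ y (θ (k + 1)) ≤ Jcost k lam R θ0 φ y t) ∧
    (∀ t, Jcost k lam R θ0 φ y t = Jcost k lam R θ0 φ y (θ (k + 1)) → t = θ (k + 1)) := by
  obtain ⟨hlam0, _hlam1⟩ := hlam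
  set M : ℕ → Matrix (Fin n) (Fin n) ℝ := Mrec lam R φ with hMdef
  set c : ℕ → (Fin n → ℝ) := crec lam R θ0 φ y with hcdef
  have hM0 : M 0 = R := rfl
  have hMs : ∀ i, M (i + 1) = lam • M i + (φ i)ᵀ * φ i := fun i => rfl
  have hc0 : c 0 = R *ᵥ θ0 := rfl
  have hcs : ∀ i, c (i + 1) = lam • c i + (φ i)ᵀ *ᵥ y i := fun i => rfl
  -- positive definiteness of M and the inverse property of P
  have key : ∀ i, (M i).PosDef ∧ P i * M i = 1 := by
    intro i
    induction i with
    | zero =>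
      refine ⟨hM0 ▸ hR, ?_⟩
      rw [hM0, hP0]
      exact Matrix.nonsing_inv_mul R (isUnit_iff_ne_zero.mpr hR.det_pos.ne')
    | succ i ih =>
      obtain ⟨hMi, hPMi⟩ := ih
      have hPi : P i = (M i)⁻¹ := (Matrix.inv_eq_left_inv hPMi).symm
      have hPiPD : (P i).PosDef := hPi ▸ hMi.inv
      have hSpd : (lam • (1 : Matrix (Fin p) (Fin p) ℝ) + φ i * P i * (φ i)ᵀ).PosDef :=
        (posdef_smul Matrix.PosDef.one hlam0).add_posSemidef
          (posSemidef_sandwich hPiPD.posSemidef (φ i))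
      have hSinv : (lam • (1 : Matrix (Fin p) (Fin p) ℝ) + φ i * P i * (φ i)ᵀ)⁻¹ *
          (lam • (1 : Matrix (Fin p) (Fin p) ℝ) + φ i * P i * (φ i)ᵀ) = 1 :=
        Matrix.nonsing_inv_mul _ (isUnit_iff_ne_zero.mpr hSpd.det_pos.ne')
      have hMsucc : (M (i + 1)).PosDef := by
        rw [hMs i]
        exact (posdef_smul hMi hlam0).add_posSemidef (posSemidef_transpose_mul_self' (φ i))
      refine ⟨hMsucc, ?_⟩
      rw [hMs i, hP i]
      exact woodbury hlam0 (φ i) hPMi hSinv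
  -- the normal equations are satisfied along the recursion
  have hMθ : ∀ i, M i *ᵥ θ i = c i := by
    intro i
    induction i with
    | zero => rw [hM0, hc0, hθ0]
    | succ i ih =>
      have hMPi1 : M (i + 1) * P (i + 1) = 1 := mul_eq_one_comm.mp (key (i + 1)).2
      have e1 : M (i + 1) *ᵥ ((P (i + 1) * (φ i)ᵀ) *ᵥ (y i - φ i *ᵥ θ i))
          = (φ i)ᵀ *ᵥ (y i - φ i *ᵥ θ i) := by
        rw [mulVec_mulVec, ← Matrix.mul_assoc, hMPi1, Matrix.one_mul]
      rw [hθ i, mulVec_add, e1, hcs i]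
      nth_rewrite 1 [hMs i]
      rw [add_mulVec, smul_mulVec, ih, ← mulVec_mulVec, mulVec_sub]
      abel
  -- expansion of the cost function as an explicit quadratic
  have hexp : ∀ (m : ℕ) (t : Fin n → ℝ), Jcost m lam R θ0 φ y t
      = t ⬝ᵥ (M (m + 1) *ᵥ t) - 2 * (c (m + 1) ⬝ᵥ t) + erec lam R θ0 y m := by
    intro m
    induction m with
    | zero =>
      intro t
      have hRsym : Rᵀ = R := by
        have h := hR.isHermitian
        rwa [Matrix.IsHermitian, conjTranspose_eq_transpose_of_trivial] at h
      unfold Jcost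
      rw [Finset.sum_range_one, Nat.sub_zero, pow_zero, one_mul, pow_one,
        residual_expand, reg_expand hRsym θ0 t, hMs 0, hM0, hcs 0, hc0]
      show _ = t ⬝ᵥ ((lam • R + (φ 0)ᵀ * φ 0) *ᵥ t)
          - 2 * ((lam • (R *ᵥ θ0) + (φ 0)ᵀ *ᵥ y 0) ⬝ᵥ t)
          + (y 0 ⬝ᵥ y 0 + lam * (θ0 ⬝ᵥ (R *ᵥ θ0)))
      rw [add_mulVec, smul_mulVec, dotProduct_add, dotProduct_smul,
        add_dotProduct, smul_dotProduct, smul_eq_mul, smul_eq_mul]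
      ring
    | succ m ih =>
      intro t
      rw [Jcost_succ, ih t, residual_expand, hMs (m + 1), hcs (m + 1)]
      show _ = _ + _ + (lam * erec lam R θ0 y m + y (m + 1) ⬝ᵥ y (m + 1))
      rw [add_mulVec, smul_mulVec, dotProduct_add, dotProduct_smul,
        add_dotProduct, smul_dotProduct, smul_eq_mul, smul_eq_mul]
      ring
  -- final quadratic comparison
  set θs : Fin n → ℝ := θ (k + 1) with hθsdef
  have hMk : (M (k + 1)).PosDef := (key (k + 1)).1
  have hMθk : M (k + 1) *ᵥ θs = c (k + 1) := hMθ (k + 1)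
  have hMsym : (M (k + 1))ᵀ = M (k + 1) := by
    have h := hMk.isHermitian
    rwa [Matrix.IsHermitian, conjTranspose_eq_transpose_of_trivial] at h
  have hdiff : ∀ t, Jcost k lam R θ0 φ y t - Jcost k lam R θ0 φ y θs
      = (t - θs) ⬝ᵥ (M (k + 1) *ᵥ (t - θs)) := by
    intro t
    have hcomm : (M (k + 1) *ᵥ θs) ⬝ᵥ θs = θs ⬝ᵥ (M (k + 1) *ᵥ θs) := dotProduct_comm _ _
    rw [hexp k t, hexp k θs, ← hMθk, reg_expand hMsym θs t, hcomm]
    ring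
  constructor
  · intro t
    have h0 := hdiff t
    have hpos : 0 ≤ (t - θs) ⬝ᵥ (M (k + 1) *ᵥ (t - θs)) := by
      simpa using hMk.posSemidef.dotProduct_mulVec_nonneg (t - θs)
    linarith
  · intro t ht
    by_contra hne
    have hzero : (t - θs) ⬝ᵥ (M (k + 1) *ᵥ (t - θs)) = 0 := by
      rw [← hdiff t, ht, sub_self]
    have hne' : t - θs ≠ 0 := sub_ne_zero.mpr hne
    have hpos : 0 < (t - θs) ⬝ᵥ (M (k + 1) *ᵥ (t - θs)) := by
      simpa using hMk.dotProduct_mulVec_pos hne'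
    exact hpos.ne' hzero
end

section
/- Fix an integer k ≥ 0. Let λ ∈ (0,1], let R ∈ ℝ^{n×n} be positive definite, let θ_0 ∈ ℝ^n, and for all i ≥ 0 let φ_i ∈ ℝ^{p×n} and y_i ∈ ℝ^p. Define P_0 := R^{-1} and, for all i ≥ 0, θ_{i+1} := θ_i + P_i φ_i^T (λ I_p + φ_i P_i φ_i^T)^{-1} (y_i − φ_i θ_i) and P_{i+1} := (1/λ)P_i − (1/λ)P_i φ_i^T (λ I_p + φ_i P_i φ_i^T)^{-1} φ_i P_i (where θ_{i+1} is computed using P_i, before P_i is updated). Then θ_{k+1} is the unique global minimizer over θ̂ ∈ ℝ^n of the cost J_k(θ̂). -/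
open Matrix

variable {n p : ℕ}

noncomputable def Mmat (lam : ℝ) (R : Matrix (Fin n) (Fin n) ℝ)
    (φ : ℕ → Matrix (Fin p) (Fin n) ℝ) (i : ℕ) : Matrix (Fin n) (Fin n) ℝ :=
  lam ^ i • R + ∑ j ∈ Finset.range i, lam ^ (i - 1 - j) • ((φ j)ᵀ * φ j)

noncomputable def cvec (lam : ℝ) (R : Matrix (Fin n) (Fin n) ℝ) (θ0 : Fin n → ℝ)
    (φ : ℕ → Matrix (Fin p) (Fin n) ℝ) (y : ℕ → (Fin p → ℝ)) (i : ℕ) : Fin n → ℝ :=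
  lam ^ i • (R *ᵥ θ0) + ∑ j ∈ Finset.range i, lam ^ (i - 1 - j) • ((φ j)ᵀ *ᵥ y j)

lemma Mmat_zero (lam : ℝ) (R : Matrix (Fin n) (Fin n) ℝ) (φ : ℕ → Matrix (Fin p) (Fin n) ℝ) :
    Mmat lam R φ 0 = R := by simp [Mmat]

lemma Mmat_succ (lam : ℝ) (R : Matrix (Fin n) (Fin n) ℝ) (φ : ℕ → Matrix (Fin p) (Fin n) ℝ)
    (i : ℕ) : Mmat lam R φ (i + 1) = lam • Mmat lam R φ i + (φ i)ᵀ * φ i := by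
  unfold Mmat
  rw [Finset.sum_range_succ, Finset.sum_congr rfl
    (fun j hj => show lam ^ (i + 1 - 1 - j) • ((φ j)ᵀ * φ j)
        = lam • lam ^ (i - 1 - j) • ((φ j)ᵀ * φ j) by
      have hj' := Finset.mem_range.mp hj
      have h2 : i + 1 - 1 - j = (i - 1 - j) + 1 := by omega
      rw [h2, pow_succ', mul_smul])]
  simp [smul_add, Finset.smul_sum, smul_smul, ← pow_succ']
  abel

lemma cvec_zero (lam : ℝ) (R : Matrix (Fin n) (Fin n) ℝ) (θ0 : Fin n → ℝ)
    (φ : ℕ → Matrix (Fin p) (Fin n) ℝ) (y : ℕ → (Fin p → ℝ)) :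
    cvec lam R θ0 φ y 0 = R *ᵥ θ0 := by simp [cvec]

lemma cvec_succ (lam : ℝ) (R : Matrix (Fin n) (Fin n) ℝ) (θ0 : Fin n → ℝ)
    (φ : ℕ → Matrix (Fin p) (Fin n) ℝ) (y : ℕ → (Fin p → ℝ)) (i : ℕ) :
    cvec lam R θ0 φ y (i + 1) = lam • cvec lam R θ0 φ y i + (φ i)ᵀ *ᵥ y i := by
  unfold cvec
  rw [Finset.sum_range_succ, Finset.sum_congr rfl
    (fun j hj => show lam ^ (i + 1 - 1 - j) • ((φ j)ᵀ *ᵥ y j)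
        = lam • lam ^ (i - 1 - j) • ((φ j)ᵀ *ᵥ y j) by
      have hj' := Finset.mem_range.mp hj
      have h2 : i + 1 - 1 - j = (i - 1 - j) + 1 := by omega
      rw [h2, pow_succ', mul_smul])]
  simp [smul_add, Finset.smul_sum, smul_smul, ← pow_succ']
  abel

lemma posDef_smul {m : Type*} [Fintype m] {c : ℝ} (hc : 0 < c) {A : Matrix m m ℝ}
    (hA : A.PosDef) : (c • A).PosDef := by
  have ht : Aᵀ = A := by simpa using hA.1.eq
  refine Matrix.PosDef.of_dotProduct_mulVec_pos (by simp [Matrix.IsHermitian, ht]) (fun x hx => ?_)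
  rw [smul_mulVec, dotProduct_smul, smul_eq_mul]
  exact mul_pos hc (by simpa using hA.dotProduct_mulVec_pos hx)

lemma posSemidef_smul {m : Type*} [Fintype m] {c : ℝ} (hc : 0 ≤ c) {A : Matrix m m ℝ}
    (hA : A.PosSemidef) : (c • A).PosSemidef := by
  have ht : Aᵀ = A := by simpa using hA.1.eq
  refine Matrix.PosSemidef.of_dotProduct_mulVec_nonneg (by simp [Matrix.IsHermitian, ht]) (fun x => ?_)
  rw [smul_mulVec, dotProduct_smul, smul_eq_mul]
  exact mul_nonneg hc (by simpa using hA.dotProduct_mulVec_nonneg x)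

lemma posSemidef_tmul (φ : Matrix (Fin p) (Fin n) ℝ) : (φᵀ * φ).PosSemidef := by
  simpa using posSemidef_conjTranspose_mul_self φ

lemma Mmat_posDef {lam : ℝ} (hlam : 0 < lam) {R : Matrix (Fin n) (Fin n) ℝ} (hR : R.PosDef)
    (φ : ℕ → Matrix (Fin p) (Fin n) ℝ) (i : ℕ) : (Mmat lam R φ i).PosDef := by
  refine Matrix.PosDef.add_posSemidef (posDef_smul (pow_pos hlam i) hR) ?_
  refine Finset.sum_induction _ _ (fun a b ha hb => ha.add hb) (PosSemidef.zero) ?_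
  intro j hj
  exact posSemidef_smul (pow_nonneg hlam.le _) (posSemidef_tmul (φ j))

lemma S_posDef {lam : ℝ} (hlam : 0 < lam) {M : Matrix (Fin n) (Fin n) ℝ} (hMpd : M.PosDef)
    (Φ : Matrix (Fin p) (Fin n) ℝ) :
    (lam • (1 : Matrix (Fin p) (Fin p) ℝ) + Φ * M⁻¹ * Φᵀ).PosDef := by
  refine Matrix.PosDef.add_posSemidef (posDef_smul hlam Matrix.PosDef.one) ?_
  have := hMpd.inv.posSemidef.mul_mul_conjTranspose_same Φ
  simpa [Matrix.mul_assoc] using this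

lemma pushthrough {lam : ℝ} (hlam : 0 < lam) {M : Matrix (Fin n) (Fin n) ℝ} (hMpd : M.PosDef)
    (Φ : Matrix (Fin p) (Fin n) ℝ) :
    (lam • M + Φᵀ * Φ) *
      (M⁻¹ * Φᵀ * (lam • (1 : Matrix (Fin p) (Fin p) ℝ) + Φ * M⁻¹ * Φᵀ)⁻¹) = Φᵀ := by
  set S := lam • (1 : Matrix (Fin p) (Fin p) ℝ) + Φ * M⁻¹ * Φᵀ with hSdef
  have hSpd : S.PosDef := S_posDef hlam hMpd Φ
  have hMM : M * M⁻¹ = 1 := Matrix.mul_nonsing_inv M hMpd.det_pos.ne'.isUnit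
  have hSS : S * S⁻¹ = 1 := Matrix.mul_nonsing_inv S hSpd.det_pos.ne'.isUnit
  calc (lam • M + Φᵀ * Φ) * (M⁻¹ * Φᵀ * S⁻¹)
      = (lam • (M * M⁻¹) * Φᵀ + Φᵀ * (Φ * M⁻¹ * Φᵀ)) * S⁻¹ := by
        simp only [Matrix.add_mul, Matrix.smul_mul, Matrix.mul_assoc]
    _ = Φᵀ * (S * S⁻¹) := by
        rw [hMM, Matrix.smul_mul, Matrix.one_mul, hSdef]
        simp only [Matrix.add_mul, Matrix.mul_add, Matrix.smul_mul, Matrix.mul_smul,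
          Matrix.one_mul, Matrix.mul_one, Matrix.mul_assoc]
    _ = Φᵀ := by rw [hSS, Matrix.mul_one]

lemma woodbury {lam : ℝ} (hlam : 0 < lam) {M : Matrix (Fin n) (Fin n) ℝ} (hMpd : M.PosDef)
    (Φ : Matrix (Fin p) (Fin n) ℝ) :
    ((1 / lam) • M⁻¹ -
      (1 / lam) • (M⁻¹ * Φᵀ * (lam • (1 : Matrix (Fin p) (Fin p) ℝ) + Φ * M⁻¹ * Φᵀ)⁻¹ *
        (Φ * M⁻¹))) * (lam • M + Φᵀ * Φ) = 1 := by
  set S := lam • (1 : Matrix (Fin p) (Fin p) ℝ) + Φ * M⁻¹ * Φᵀ with hSdef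
  have hSpd : S.PosDef := S_posDef hlam hMpd Φ
  have hMM' : M⁻¹ * M = 1 := Matrix.nonsing_inv_mul M hMpd.det_pos.ne'.isUnit
  have hSS' : S⁻¹ * S = 1 := Matrix.nonsing_inv_mul S hSpd.det_pos.ne'.isUnit
  have scal : (1 / lam) * lam = 1 := by field_simp
  have hkey : S⁻¹ * (Φ * M⁻¹ * Φᵀ) = 1 - lam • S⁻¹ := by
    have h1 : S⁻¹ * (lam • (1 : Matrix (Fin p) (Fin p) ℝ)) + S⁻¹ * (Φ * M⁻¹ * Φᵀ) = 1 := by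
      rw [← Matrix.mul_add, ← hSdef, hSS']
    have h2 : S⁻¹ * (lam • (1 : Matrix (Fin p) (Fin p) ℝ)) = lam • S⁻¹ := by
      rw [Matrix.mul_smul, Matrix.mul_one]
    linear_combination (norm := noncomm_ring) h1 - h2
  have h4 : (M⁻¹ * Φᵀ * S⁻¹ * (Φ * M⁻¹)) * (Φᵀ * Φ)
      = M⁻¹ * (Φᵀ * Φ) - lam • (M⁻¹ * Φᵀ * S⁻¹ * Φ) := by
    calc (M⁻¹ * Φᵀ * S⁻¹ * (Φ * M⁻¹)) * (Φᵀ * Φ)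
        = M⁻¹ * (Φᵀ * (S⁻¹ * (Φ * (M⁻¹ * Φᵀ)) * Φ)) := by
          simp only [Matrix.mul_assoc]
      _ = M⁻¹ * (Φᵀ * ((1 - lam • S⁻¹) * Φ)) := by
          rw [← Matrix.mul_assoc (M⁻¹) Φᵀ, ← Matrix.mul_assoc Φ M⁻¹, hkey]
          simp only [Matrix.mul_assoc]
      _ = M⁻¹ * (Φᵀ * Φ) - lam • (M⁻¹ * Φᵀ * S⁻¹ * Φ) := by
          simp only [Matrix.sub_mul, Matrix.mul_sub, Matrix.smul_mul, Matrix.mul_smul,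
            Matrix.one_mul, Matrix.mul_assoc]
  have hA1 : ((1 / lam) • M⁻¹) * (lam • M) = 1 := by
    rw [Matrix.smul_mul, Matrix.mul_smul, smul_smul, scal, one_smul, hMM']
  have hA2 : ((1 / lam) • M⁻¹) * (Φᵀ * Φ) = (1 / lam) • (M⁻¹ * (Φᵀ * Φ)) := by
    rw [Matrix.smul_mul]
  have hA3 : ((1 / lam) • (M⁻¹ * Φᵀ * S⁻¹ * (Φ * M⁻¹))) * (lam • M)
      = M⁻¹ * Φᵀ * S⁻¹ * Φ := by
    rw [Matrix.smul_mul, Matrix.mul_smul, smul_smul, scal, one_smul]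
    calc M⁻¹ * Φᵀ * S⁻¹ * (Φ * M⁻¹) * M
        = M⁻¹ * (Φᵀ * (S⁻¹ * (Φ * (M⁻¹ * M)))) := by simp only [Matrix.mul_assoc]
      _ = M⁻¹ * Φᵀ * S⁻¹ * Φ := by rw [hMM', Matrix.mul_one]; simp only [Matrix.mul_assoc]
  have hA4 : ((1 / lam) • (M⁻¹ * Φᵀ * S⁻¹ * (Φ * M⁻¹))) * (Φᵀ * Φ)
      = (1 / lam) • (M⁻¹ * (Φᵀ * Φ)) - M⁻¹ * Φᵀ * S⁻¹ * Φ := by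
    rw [Matrix.smul_mul, h4, smul_sub, smul_smul, scal, one_smul]
  calc ((1 / lam) • M⁻¹ - (1 / lam) • (M⁻¹ * Φᵀ * S⁻¹ * (Φ * M⁻¹))) * (lam • M + Φᵀ * Φ)
      = ((1 / lam) • M⁻¹) * (lam • M) + ((1 / lam) • M⁻¹) * (Φᵀ * Φ)
        - (((1 / lam) • (M⁻¹ * Φᵀ * S⁻¹ * (Φ * M⁻¹))) * (lam • M)
          + ((1 / lam) • (M⁻¹ * Φᵀ * S⁻¹ * (Φ * M⁻¹))) * (Φᵀ * Φ)) := by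
        simp only [Matrix.sub_mul, Matrix.mul_add]
        abel
    _ = 1 := by rw [hA1, hA2, hA3, hA4]; abel

lemma key_induction {lam : ℝ} (hlam : 0 < lam) {R : Matrix (Fin n) (Fin n) ℝ} (hR : R.PosDef)
    (θ0 : Fin n → ℝ) (φ : ℕ → Matrix (Fin p) (Fin n) ℝ) (y : ℕ → (Fin p → ℝ))
    (P : ℕ → Matrix (Fin n) (Fin n) ℝ) (θ : ℕ → (Fin n → ℝ))
    (hP0 : P 0 = R⁻¹) (hθ0 : θ 0 = θ0)
    (hθ : ∀ i, θ (i + 1) = θ i +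
      (P i * (φ i)ᵀ *
        (lam • (1 : Matrix (Fin p) (Fin p) ℝ) + φ i * P i * (φ i)ᵀ)⁻¹) *ᵥ
        (y i - φ i *ᵥ θ i))
    (hP : ∀ i, P (i + 1) =
      (1 / lam) • P i -
      (1 / lam) • (P i * (φ i)ᵀ *
        (lam • (1 : Matrix (Fin p) (Fin p) ℝ) + φ i * P i * (φ i)ᵀ)⁻¹ * (φ i * P i))) :
    ∀ i, P i = (Mmat lam R φ i)⁻¹ ∧ Mmat lam R φ i *ᵥ θ i = cvec lam R θ0 φ y i := by
  intro i
  induction i with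
  | zero => exact ⟨by rw [hP0, Mmat_zero], by rw [Mmat_zero, hθ0, cvec_zero]⟩
  | succ i ih =>
    obtain ⟨ihP, ihθ⟩ := ih
    have hMpd : (Mmat lam R φ i).PosDef := Mmat_posDef hlam hR φ i
    have hPsucc : P (i + 1) =
        (1 / lam) • (Mmat lam R φ i)⁻¹ -
        (1 / lam) • ((Mmat lam R φ i)⁻¹ * (φ i)ᵀ *
          (lam • (1 : Matrix (Fin p) (Fin p) ℝ) + φ i * (Mmat lam R φ i)⁻¹ * (φ i)ᵀ)⁻¹ *
          (φ i * (Mmat lam R φ i)⁻¹)) := by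
      rw [hP i, ihP]
    have hPinv : P (i + 1) = (Mmat lam R φ (i + 1))⁻¹ := by
      symm
      apply Matrix.inv_eq_left_inv
      rw [hPsucc, Mmat_succ]
      exact woodbury hlam hMpd (φ i)
    refine ⟨hPinv, ?_⟩
    have hθsucc : θ (i + 1) = θ i +
        ((Mmat lam R φ i)⁻¹ * (φ i)ᵀ *
          (lam • (1 : Matrix (Fin p) (Fin p) ℝ) + φ i * (Mmat lam R φ i)⁻¹ * (φ i)ᵀ)⁻¹) *ᵥ
          (y i - φ i *ᵥ θ i) := by
      rw [hθ i, ihP]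
    rw [hθsucc, cvec_succ, ← ihθ]
    have hpt : Mmat lam R φ (i + 1) *
        ((Mmat lam R φ i)⁻¹ * (φ i)ᵀ *
          (lam • (1 : Matrix (Fin p) (Fin p) ℝ) + φ i * (Mmat lam R φ i)⁻¹ * (φ i)ᵀ)⁻¹)
        = (φ i)ᵀ := by
      rw [Mmat_succ]
      exact pushthrough hlam hMpd (φ i)
    rw [mulVec_add, mulVec_mulVec, hpt, Mmat_succ, add_mulVec, smul_mulVec,
      mulVec_sub, ← mulVec_mulVec]
    abel

lemma sum_mulVec' {ι : Type*} (s : Finset ι) (A : ι → Matrix (Fin n) (Fin n) ℝ)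
    (t : Fin n → ℝ) : (∑ j ∈ s, A j) *ᵥ t = ∑ j ∈ s, A j *ᵥ t := by
  induction s using Finset.cons_induction with
  | empty => simp [Matrix.zero_mulVec]
  | cons a s ha ih => simp [Finset.sum_cons, Matrix.add_mulVec, ih]

lemma dotProduct_sum' {ι : Type*} (s : Finset ι) (f : ι → (Fin n → ℝ))
    (t : Fin n → ℝ) : t ⬝ᵥ (∑ j ∈ s, f j) = ∑ j ∈ s, t ⬝ᵥ f j := by
  induction s using Finset.cons_induction with
  | empty => simp
  | cons a s ha ih => simp [Finset.sum_cons, dotProduct_add, ih]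

lemma sum_dotProduct' {ι : Type*} (s : Finset ι) (f : ι → (Fin n → ℝ))
    (t : Fin n → ℝ) : (∑ j ∈ s, f j) ⬝ᵥ t = ∑ j ∈ s, f j ⬝ᵥ t := by
  induction s using Finset.cons_induction with
  | empty => simp
  | cons a s ha ih => simp [Finset.sum_cons, add_dotProduct, ih]

lemma dot_trans (A : Matrix (Fin p) (Fin n) ℝ) (u : Fin p → ℝ) (t : Fin n → ℝ) :
    u ⬝ᵥ (A *ᵥ t) = (Aᵀ *ᵥ u) ⬝ᵥ t := by
  rw [mulVec_transpose, ← dotProduct_mulVec]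

lemma expand_sq (A : Matrix (Fin p) (Fin n) ℝ) (u : Fin p → ℝ) (t : Fin n → ℝ) :
    (u - A *ᵥ t) ⬝ᵥ (u - A *ᵥ t)
      = t ⬝ᵥ ((Aᵀ * A) *ᵥ t) - 2 * ((Aᵀ *ᵥ u) ⬝ᵥ t) + u ⬝ᵥ u := by
  have h1 : u ⬝ᵥ (A *ᵥ t) = (Aᵀ *ᵥ u) ⬝ᵥ t := dot_trans A u t
  have h2 : (A *ᵥ t) ⬝ᵥ u = (Aᵀ *ᵥ u) ⬝ᵥ t := by rw [dotProduct_comm]; exact h1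
  have h3 : (A *ᵥ t) ⬝ᵥ (A *ᵥ t) = t ⬝ᵥ ((Aᵀ * A) *ᵥ t) := by
    rw [dot_trans A (A *ᵥ t) t, mulVec_mulVec, dotProduct_comm]
  rw [dotProduct_sub, sub_dotProduct, sub_dotProduct, h1, h2, h3]
  ring

lemma expand_sqR {R : Matrix (Fin n) (Fin n) ℝ} (hRs : Rᵀ = R) (θ0 t : Fin n → ℝ) :
    (t - θ0) ⬝ᵥ (R *ᵥ (t - θ0))
      = t ⬝ᵥ (R *ᵥ t) - 2 * ((R *ᵥ θ0) ⬝ᵥ t) + θ0 ⬝ᵥ (R *ᵥ θ0) := by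
  have h1 : θ0 ⬝ᵥ (R *ᵥ t) = (R *ᵥ θ0) ⬝ᵥ t := by rw [dot_trans R θ0 t, hRs]
  have h2 : t ⬝ᵥ (R *ᵥ θ0) = (R *ᵥ θ0) ⬝ᵥ t := dotProduct_comm _ _
  rw [mulVec_sub, dotProduct_sub, sub_dotProduct, sub_dotProduct, h1, h2]
  ring

lemma Jcost_expand (k : ℕ) (lam : ℝ) {R : Matrix (Fin n) (Fin n) ℝ} (hRs : Rᵀ = R)
    (θ0 : Fin n → ℝ) (φ : ℕ → Matrix (Fin p) (Fin n) ℝ) (y : ℕ → (Fin p → ℝ))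
    (t : Fin n → ℝ) :
    Jcost k lam R θ0 φ y t
      = t ⬝ᵥ (Mmat lam R φ (k + 1) *ᵥ t) - 2 * (cvec lam R θ0 φ y (k + 1) ⬝ᵥ t)
        + ((∑ i ∈ Finset.range (k + 1), lam ^ (k - i) * (y i ⬝ᵥ y i))
            + lam ^ (k + 1) * (θ0 ⬝ᵥ (R *ᵥ θ0))) := by
  have hA : t ⬝ᵥ (Mmat lam R φ (k + 1) *ᵥ t)
      = lam ^ (k + 1) * (t ⬝ᵥ (R *ᵥ t))
        + ∑ j ∈ Finset.range (k + 1), lam ^ (k - j) * (t ⬝ᵥ (((φ j)ᵀ * φ j) *ᵥ t)) := by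
    unfold Mmat
    rw [add_mulVec, smul_mulVec, sum_mulVec', dotProduct_add, dotProduct_smul,
      dotProduct_sum']
    simp [smul_mulVec, dotProduct_smul, Nat.add_sub_cancel]
  have hb : cvec lam R θ0 φ y (k + 1) ⬝ᵥ t
      = lam ^ (k + 1) * ((R *ᵥ θ0) ⬝ᵥ t)
        + ∑ j ∈ Finset.range (k + 1), lam ^ (k - j) * (((φ j)ᵀ *ᵥ y j) ⬝ᵥ t) := by
    unfold cvec
    rw [add_dotProduct, smul_dotProduct, sum_dotProduct']
    simp [smul_dotProduct, Nat.add_sub_cancel]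
  have hterm : ∀ i ∈ Finset.range (k + 1),
      lam ^ (k - i) * ((y i - φ i *ᵥ t) ⬝ᵥ (y i - φ i *ᵥ t))
        = lam ^ (k - i) * (t ⬝ᵥ (((φ i)ᵀ * φ i) *ᵥ t))
          - 2 * (lam ^ (k - i) * (((φ i)ᵀ *ᵥ y i) ⬝ᵥ t))
          + lam ^ (k - i) * (y i ⬝ᵥ y i) := by
    intro i _
    rw [expand_sq]
    ring
  unfold Jcost
  rw [Finset.sum_congr rfl hterm, expand_sqR hRs, hA, hb,
    Finset.sum_add_distrib, Finset.sum_sub_distrib, ← Finset.mul_sum]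
  ring

lemma quad_min {A : Matrix (Fin n) (Fin n) ℝ} (hA : A.PosDef) {b θs : Fin n → ℝ}
    (hθs : A *ᵥ θs = b) (t : Fin n → ℝ) :
    (t ⬝ᵥ (A *ᵥ t) - 2 * (b ⬝ᵥ t)) - (θs ⬝ᵥ (A *ᵥ θs) - 2 * (b ⬝ᵥ θs))
      = (t - θs) ⬝ᵥ (A *ᵥ (t - θs)) := by
  have hAs : Aᵀ = A := by simpa using hA.1.eq
  have h1 : t ⬝ᵥ (A *ᵥ θs) = b ⬝ᵥ t := by rw [hθs, dotProduct_comm]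
  have h2 : θs ⬝ᵥ (A *ᵥ t) = b ⬝ᵥ t := by rw [dot_trans A θs t, hAs, hθs]
  have h3 : θs ⬝ᵥ (A *ᵥ θs) = b ⬝ᵥ θs := by rw [hθs, dotProduct_comm]
  rw [mulVec_sub, dotProduct_sub, sub_dotProduct, sub_dotProduct, h1, h2, h3]
  ring


theorem stmt1 {n p : ℕ} (k : ℕ) (lam : ℝ) (hlam : lam ∈ Set.Ioc (0 : ℝ) 1)
    (R : Matrix (Fin n) (Fin n) ℝ) (hR : R.PosDef)
    (θ0 : Fin n → ℝ) (φ : ℕ → Matrix (Fin p) (Fin n) ℝ) (y : ℕ → (Fin p → ℝ))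
    (P : ℕ → Matrix (Fin n) (Fin n) ℝ) (θ : ℕ → (Fin n → ℝ))
    (hP0 : P 0 = R⁻¹) (hθ0 : θ 0 = θ0)
    (hθ : ∀ i, θ (i + 1) = θ i +
      (P i * (φ i)ᵀ *
        (lam • (1 : Matrix (Fin p) (Fin p) ℝ) + φ i * P i * (φ i)ᵀ)⁻¹) *ᵥ
        (y i - φ i *ᵥ θ i))
    (hP : ∀ i, P (i + 1) =
      (1 / lam) • P i -
      (1 / lam) • (P i * (φ i)ᵀ *
        (lam • (1 : Matrix (Fin p) (Fin p) ℝ) + φ i * P i * (φ i)ᵀ)⁻¹ * (φ i * P i))) :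
    (∀ t, Jcost k lam R θ0 φ y (θ (k + 1)) ≤ Jcost k lam R θ0 φ y t) ∧
    (∀ t, Jcost k lam R θ0 φ y t = Jcost k lam R θ0 φ y (θ (k + 1)) → t = θ (k + 1)) := by
  have hlam0 : 0 < lam := hlam.1
  have hRs : Rᵀ = R := by simpa using hR.1.eq
  have hApd : (Mmat lam R φ (k + 1)).PosDef := Mmat_posDef hlam0 hR φ (k + 1)
  have hnormal : Mmat lam R φ (k + 1) *ᵥ θ (k + 1) = cvec lam R θ0 φ y (k + 1) :=
    (key_induction hlam0 hR θ0 φ y P θ hP0 hθ0 hθ hP (k + 1)).2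
  have hdiff : ∀ t, Jcost k lam R θ0 φ y t - Jcost k lam R θ0 φ y (θ (k + 1))
      = (t - θ (k + 1)) ⬝ᵥ (Mmat lam R φ (k + 1) *ᵥ (t - θ (k + 1))) := by
    intro t
    have hq := quad_min hApd hnormal t
    rw [Jcost_expand k lam hRs θ0 φ y t, Jcost_expand k lam hRs θ0 φ y (θ (k + 1))]
    linear_combination hq
  constructor
  · intro t
    have hpos : 0 ≤ (t - θ (k + 1)) ⬝ᵥ (Mmat lam R φ (k + 1) *ᵥ (t - θ (k + 1))) := by
      simpa using hApd.posSemidef.dotProduct_mulVec_nonneg (t - θ (k + 1))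
    have := hdiff t
    linarith
  · intro t ht
    have h0 : (t - θ (k + 1)) ⬝ᵥ (Mmat lam R φ (k + 1) *ᵥ (t - θ (k + 1))) = 0 := by
      rw [← hdiff t, ht]
      ring
    by_contra hne
    have hsub : t - θ (k + 1) ≠ 0 := sub_ne_zero.mpr hne
    have := hApd.dotProduct_mulVec_pos hsub
    simp only [star_trivial] at this
    linarith [h0 ▸ this]
end

section
/- Let (φ_k)_{k=0}^∞ ⊂ ℝ^{p×n} be persistently exciting with constants N, α, β as in the definition, let R ∈ ℝ^{n×n} be positive definite, set P_0 := R^{-1}, let λ = 1, and let (P_k)_{k=0}^∞ satisfy the RLS covariance recursion P_{k+1}^{-1} = P_k^{-1} + φ_k^T φ_k. Then for all k ≥ N+1, ⌊k/(N+1)⌋·α·I_n + P_0^{-1} ≤ P_k^{-1} ≤ ⌈k/(N+1)⌉·β·I_n + P_0^{-1} in the Loewner order. Consequently, P_k → 0 as k → ∞. -/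
open Matrix

section Aux

lemma inv_loewner {n : ℕ} {A : Matrix (Fin n) (Fin n) ℝ} (hA : A.PosDef) {c : ℝ} (hc : 0 < c)
    (h : (A⁻¹ - c • (1 : Matrix (Fin n) (Fin n) ℝ)).PosSemidef) :
    (c⁻¹ • (1 : Matrix (Fin n) (Fin n) ℝ) - A).PosSemidef := by
  refine Matrix.PosSemidef.of_dotProduct_mulVec_nonneg ?_ ?_
  · have h1 : (c⁻¹ • (1 : Matrix (Fin n) (Fin n) ℝ)).IsHermitian := by
      simp [Matrix.IsHermitian, Matrix.conjTranspose_smul]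
    exact h1.sub hA.1
  · intro x
    have hinv : A⁻¹ *ᵥ (A *ᵥ x) = x := by
      rw [Matrix.mulVec_mulVec, Matrix.nonsing_inv_mul A (isUnit_iff_ne_zero.2 hA.det_pos.ne'),
        Matrix.one_mulVec]
    set y := A *ᵥ x with hy
    have h2 := h.dotProduct_mulVec_nonneg y
    simp only [Matrix.sub_mulVec, Matrix.smul_mulVec, Matrix.one_mulVec,
      dotProduct_sub, dotProduct_smul, star_trivial, hinv, smul_eq_mul] at h2
    have hq0 : (0:ℝ) ≤ x ⬝ᵥ y := by
      have := hA.posSemidef.dotProduct_mulVec_nonneg x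
      simpa [star_trivial] using this
    have hx0 : (0:ℝ) ≤ x ⬝ᵥ x := by
      simpa [dotProduct] using Finset.sum_nonneg (fun i _ => mul_self_nonneg (x i))
    have hy0 : (0:ℝ) ≤ y ⬝ᵥ y := by
      simpa [dotProduct] using Finset.sum_nonneg (fun i _ => mul_self_nonneg (y i))
    have hcs : (x ⬝ᵥ y) ^ 2 ≤ (x ⬝ᵥ x) * (y ⬝ᵥ y) := by
      have := Finset.sum_mul_sq_le_sq_mul_sq Finset.univ x y
      simpa [dotProduct, pow_two, mul_comm] using this
    have hyx : y ⬝ᵥ x = x ⬝ᵥ y := dotProduct_comm y x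
    rw [hyx] at h2
    have key : c * (x ⬝ᵥ y) ≤ x ⬝ᵥ x := by
      rcases eq_or_lt_of_le hq0 with hq | hq
      · nlinarith
      · nlinarith [mul_le_mul_of_nonneg_left hcs (le_of_lt hc)]
    simp only [Matrix.sub_mulVec, Matrix.smul_mulVec, Matrix.one_mulVec,
      dotProduct_sub, dotProduct_smul, star_trivial, smul_eq_mul]
    rw [sub_nonneg]
    calc x ⬝ᵥ y ≤ c⁻¹ * (c * (x ⬝ᵥ y)) := by field_simp; exact le_refl _
      _ ≤ c⁻¹ * (x ⬝ᵥ x) := mul_le_mul_of_nonneg_left key (by positivity)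

lemma entry_bound {n : ℕ} {S : Matrix (Fin n) (Fin n) ℝ} (h1 : S.PosSemidef) {ε : ℝ}
    (h2 : (ε • (1 : Matrix (Fin n) (Fin n) ℝ) - S).PosSemidef) (i j : Fin n) :
    |S i j| ≤ ε := by
  have hq : ∀ x : Fin n → ℝ, x ⬝ᵥ (S *ᵥ x) ≤ ε * (x ⬝ᵥ x) := by
    intro x
    have := h2.dotProduct_mulVec_nonneg x
    simp only [Matrix.sub_mulVec, Matrix.smul_mulVec, Matrix.one_mulVec,
      dotProduct_sub, dotProduct_smul, star_trivial, smul_eq_mul] at this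
    linarith
  have hdiag : ∀ t : Fin n, 0 ≤ S t t ∧ S t t ≤ ε := by
    intro t
    have e1 : (Pi.single t 1 : Fin n → ℝ) ⬝ᵥ (S *ᵥ Pi.single t 1) = S t t := by
      simp [single_dotProduct, Matrix.mulVec, dotProduct_single]
    have e2 : (Pi.single t 1 : Fin n → ℝ) ⬝ᵥ (Pi.single t 1 : Fin n → ℝ) = 1 := by
      simp [single_dotProduct, Pi.single_apply]
    have l := hq (Pi.single t 1)
    have p := h1.dotProduct_mulVec_nonneg (Pi.single t 1)
    rw [star_trivial, e1] at p
    rw [e1, e2, mul_one] at l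
    exact ⟨p, l⟩
  rcases eq_or_ne i j with rfl | hij
  · rw [abs_le]; exact ⟨by linarith [(hdiag i).1, (hdiag i).2], (hdiag i).2⟩
  · have hsym : S j i = S i j := by
      have := h1.1.apply i j
      simpa [star_trivial] using this
    have key : ∀ c : ℝ, c = 1 ∨ c = -1 → 2 * (c * S i j) ≤ 2 * ε := by
      intro c hc
      set x : Fin n → ℝ := Pi.single i 1 + Pi.single j c with hx
      have e1 : x ⬝ᵥ (S *ᵥ x) = S i i + c * S i j + c * S j i + c * c * S j j := by
        simp [hx, add_dotProduct, single_dotProduct,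
          Matrix.mulVec, dotProduct_add, dotProduct_single]
        ring
      have e2 : x ⬝ᵥ x = 1 + c * c := by
        simp [hx, add_dotProduct, single_dotProduct,
          dotProduct_add, dotProduct_single,
          Pi.single_apply, Pi.add_apply, hij, hij.symm]
      have l := hq x
      rw [e1, e2] at l
      have hc2 : c * c = 1 := by rcases hc with rfl | rfl <;> norm_num
      have di := (hdiag i).1
      have dj := (hdiag j).1
      rw [hsym, hc2] at l
      nlinarith
    have k1 := key 1 (Or.inl rfl)
    have k2 := key (-1) (Or.inr rfl)
    rw [abs_le]
    constructor <;> nlinarith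

lemma floor_eq_natdiv (N k : ℕ) :
    (⌊(k : ℝ) / ((N : ℝ) + 1)⌋ : ℝ) = ((k / (N + 1) : ℕ) : ℝ) := by
  have hpos : (0:ℝ) < (N:ℝ) + 1 := by positivity
  set m := k / (N + 1) with hm
  have h1 : ((N:ℝ) + 1) * (m:ℝ) + ((k % (N+1) : ℕ) : ℝ) = (k:ℝ) := by
    exact_mod_cast Nat.div_add_mod k (N + 1)
  have h2 : ((k % (N+1) : ℕ) : ℝ) < (N:ℝ) + 1 := by
    exact_mod_cast Nat.mod_lt k (show 0 < N + 1 by omega)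
  have h3 : (0:ℝ) ≤ ((k % (N+1) : ℕ) : ℝ) := by positivity
  have : ⌊(k : ℝ) / ((N : ℝ) + 1)⌋ = (m : ℤ) := by
    rw [Int.floor_eq_iff]
    constructor
    · rw [le_div_iff₀ hpos]; push_cast; nlinarith
    · rw [div_lt_iff₀ hpos]; push_cast; nlinarith
  rw [this]; push_cast; ring

lemma ceil_eq_natdiv (N k : ℕ) :
    (⌈(k : ℝ) / ((N : ℝ) + 1)⌉ : ℝ) = (((k + N) / (N + 1) : ℕ) : ℝ) := by
  have hpos : (0:ℝ) < (N:ℝ) + 1 := by positivity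
  set M := (k + N) / (N + 1) with hM
  have h1 : ((N:ℝ) + 1) * (M:ℝ) + (((k + N) % (N+1) : ℕ) : ℝ) = (k:ℝ) + (N:ℝ) := by
    exact_mod_cast Nat.div_add_mod (k + N) (N + 1)
  have h2 : (((k + N) % (N+1) : ℕ) : ℝ) < (N:ℝ) + 1 := by
    exact_mod_cast Nat.mod_lt (k + N) (show 0 < N + 1 by omega)
  have h3 : (0:ℝ) ≤ (((k + N) % (N+1) : ℕ) : ℝ) := by positivity
  have : ⌈(k : ℝ) / ((N : ℝ) + 1)⌉ = (M : ℤ) := by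
    rw [Int.ceil_eq_iff]
    constructor
    · rw [lt_div_iff₀ hpos]
      push_cast; nlinarith
    · have h4 : (((k + N) % (N+1) : ℕ) : ℝ) ≤ (N:ℝ) := by
        exact_mod_cast Nat.le_of_lt_succ (Nat.mod_lt (k + N) (show 0 < N + 1 by omega))
      rw [div_le_iff₀ hpos]; push_cast; nlinarith
  rw [this]; push_cast; ring

end Aux

theorem stmt5 {n p : ℕ} (N : ℕ) (α β : ℝ) (hα : 0 < α) (hβ : 0 < β)
    (hN : (n : ℝ) ≤ (N : ℝ) * (p : ℝ))
    (φ : ℕ → Matrix (Fin p) (Fin n) ℝ)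
    (hPE : ∀ j : ℕ,
      ((∑ i ∈ Finset.Icc j (j + N), (φ i)ᵀ * φ i) -
        α • (1 : Matrix (Fin n) (Fin n) ℝ)).PosSemidef ∧
      (β • (1 : Matrix (Fin n) (Fin n) ℝ) -
        ∑ i ∈ Finset.Icc j (j + N), (φ i)ᵀ * φ i).PosSemidef)
    (R : Matrix (Fin n) (Fin n) ℝ) (hR : R.PosDef)
    (P : ℕ → Matrix (Fin n) (Fin n) ℝ) (hP0 : P 0 = R⁻¹) (hPk : ∀ k, (P k).PosDef)
    (hrec : ∀ k, (P (k + 1))⁻¹ = (P k)⁻¹ + (φ k)ᵀ * φ k) :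
    (∀ k, N + 1 ≤ k →
      ((P k)⁻¹ -
        ((⌊(k : ℝ) / ((N : ℝ) + 1)⌋ : ℝ) * α) • (1 : Matrix (Fin n) (Fin n) ℝ) -
        (P 0)⁻¹).PosSemidef ∧
      (((⌈(k : ℝ) / ((N : ℝ) + 1)⌉ : ℝ) * β) • (1 : Matrix (Fin n) (Fin n) ℝ) +
        (P 0)⁻¹ - (P k)⁻¹).PosSemidef) ∧
    Filter.Tendsto P Filter.atTop (nhds 0) := by
  have hpsd : ∀ i : ℕ, ((φ i)ᵀ * φ i).PosSemidef := fun i => by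
    simpa using Matrix.posSemidef_conjTranspose_mul_self (φ i)
  -- sum formula
  have hsum : ∀ k, (P k)⁻¹ = (P 0)⁻¹ + ∑ i ∈ Finset.range k, (φ i)ᵀ * φ i := by
    intro k
    induction k with
    | zero => simp
    | succ k ih => rw [hrec k, ih, Finset.sum_range_succ, add_assoc]
  -- PSD of partial sums
  have hIcoPSD : ∀ a b : ℕ,
      (∑ i ∈ Finset.Ico a b, (φ i)ᵀ * φ i).PosSemidef := by
    intro a b
    exact Finset.sum_induction _ _ (fun x y hx hy => hx.add hy) Matrix.PosSemidef.zero
      (fun i _ => hpsd i)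
  -- blocks rewrite
  have hIcc : ∀ m : ℕ, Finset.Icc (m*(N+1)) (m*(N+1)+N) = Finset.Ico (m*(N+1)) ((m+1)*(N+1)) := by
    intro m
    rw [show (m+1)*(N+1) = m*(N+1) + N + 1 by ring, Finset.Ico_add_one_right_eq_Icc]
  have hsplit : ∀ m : ℕ,
      (∑ i ∈ Finset.range ((m+1)*(N+1)), (φ i)ᵀ * φ i) =
        (∑ i ∈ Finset.range (m*(N+1)), (φ i)ᵀ * φ i)
          + ∑ i ∈ Finset.Ico (m*(N+1)) ((m+1)*(N+1)), (φ i)ᵀ * φ i := by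
    intro m
    simp only [Finset.range_eq_Ico]
    exact (Finset.sum_Ico_consecutive _ (Nat.zero_le _)
      (Nat.mul_le_mul (Nat.le_succ m) (le_refl (N+1)))).symm
  -- lower block bound
  have hlow : ∀ m : ℕ,
      ((∑ i ∈ Finset.range (m*(N+1)), (φ i)ᵀ * φ i)
        - ((m:ℝ)*α) • (1 : Matrix (Fin n) (Fin n) ℝ)).PosSemidef := by
    intro m
    induction m with
    | zero => simpa using Matrix.PosSemidef.zero
    | succ m ih =>
      have hb := (hPE (m*(N+1))).1
      rw [hIcc m] at hb
      have key := ih.add hb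
      have heq : (∑ i ∈ Finset.range ((m+1)*(N+1)), (φ i)ᵀ * φ i)
          - (((m:ℕ)+1:ℝ)*α) • (1 : Matrix (Fin n) (Fin n) ℝ)
          = ((∑ i ∈ Finset.range (m*(N+1)), (φ i)ᵀ * φ i)
              - ((m:ℝ)*α) • (1 : Matrix (Fin n) (Fin n) ℝ))
            + ((∑ i ∈ Finset.Ico (m*(N+1)) ((m+1)*(N+1)), (φ i)ᵀ * φ i)
              - α • (1 : Matrix (Fin n) (Fin n) ℝ)) := by
        rw [hsplit m, show ((m:ℝ)+1)*α = (m:ℝ)*α + α by ring, add_smul]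
        abel
      have : ((m:ℕ)+1 : ℕ) • (0:ℝ) = 0 := by simp
      rw [show (((m+1 : ℕ)):ℝ) = ((m:ℝ)+1) by push_cast; ring]
      rw [heq]
      exact key
  -- upper block bound
  have hup : ∀ m : ℕ,
      (((m:ℝ)*β) • (1 : Matrix (Fin n) (Fin n) ℝ)
        - ∑ i ∈ Finset.range (m*(N+1)), (φ i)ᵀ * φ i).PosSemidef := by
    intro m
    induction m with
    | zero => simpa using Matrix.PosSemidef.zero
    | succ m ih =>
      have hb := (hPE (m*(N+1))).2
      rw [hIcc m] at hb
      have key := ih.add hb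
      have heq : (((m:ℝ)+1)*β) • (1 : Matrix (Fin n) (Fin n) ℝ)
          - ∑ i ∈ Finset.range ((m+1)*(N+1)), (φ i)ᵀ * φ i
          = (((m:ℝ)*β) • (1 : Matrix (Fin n) (Fin n) ℝ)
              - ∑ i ∈ Finset.range (m*(N+1)), (φ i)ᵀ * φ i)
            + (β • (1 : Matrix (Fin n) (Fin n) ℝ)
              - ∑ i ∈ Finset.Ico (m*(N+1)) ((m+1)*(N+1)), (φ i)ᵀ * φ i) := by
        rw [hsplit m, show ((m:ℝ)+1)*β = (m:ℝ)*β + β by ring, add_smul]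
        abel
      rw [show (((m+1 : ℕ)):ℝ) = ((m:ℝ)+1) by push_cast; ring]
      rw [heq]
      exact key
  -- main part 1 (without the k ≥ N+1 assumption)
  have hmain : ∀ k : ℕ,
      ((P k)⁻¹ -
        ((⌊(k : ℝ) / ((N : ℝ) + 1)⌋ : ℝ) * α) • (1 : Matrix (Fin n) (Fin n) ℝ) -
        (P 0)⁻¹).PosSemidef ∧
      (((⌈(k : ℝ) / ((N : ℝ) + 1)⌉ : ℝ) * β) • (1 : Matrix (Fin n) (Fin n) ℝ) +
        (P 0)⁻¹ - (P k)⁻¹).PosSemidef := by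
    intro k
    set m := k / (N+1) with hm
    set M := (k + N) / (N+1) with hM
    have hmk : m * (N+1) ≤ k := Nat.div_mul_le_self k (N+1)
    have hkM : k ≤ M * (N+1) := by
      have h1 := Nat.div_add_mod (k+N) (N+1)
      have h2 : (k+N) % (N+1) ≤ N :=
        Nat.le_of_lt_succ (Nat.mod_lt (k+N) (show 0 < N + 1 by omega))
      rw [mul_comm]
      rw [← hM] at h1
      linarith
    constructor
    · rw [floor_eq_natdiv, hsum k, ← hm]
      have hs1 : (∑ i ∈ Finset.range k, (φ i)ᵀ * φ i)
          = (∑ i ∈ Finset.range (m*(N+1)), (φ i)ᵀ * φ i)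
            + ∑ i ∈ Finset.Ico (m*(N+1)) k, (φ i)ᵀ * φ i := by
        simp only [Finset.range_eq_Ico]
        exact (Finset.sum_Ico_consecutive _ (Nat.zero_le _) hmk).symm
      have heq : (P 0)⁻¹ + (∑ i ∈ Finset.range k, (φ i)ᵀ * φ i)
          - (((m:ℕ):ℝ)*α) • (1 : Matrix (Fin n) (Fin n) ℝ) - (P 0)⁻¹
          = ((∑ i ∈ Finset.range (m*(N+1)), (φ i)ᵀ * φ i)
              - (((m:ℕ):ℝ)*α) • (1 : Matrix (Fin n) (Fin n) ℝ))
            + ∑ i ∈ Finset.Ico (m*(N+1)) k, (φ i)ᵀ * φ i := by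
        rw [hs1]; abel
      rw [heq]
      exact (hlow m).add (hIcoPSD _ _)
    · rw [ceil_eq_natdiv, hsum k, ← hM]
      have hs2 : (∑ i ∈ Finset.range (M*(N+1)), (φ i)ᵀ * φ i)
          = (∑ i ∈ Finset.range k, (φ i)ᵀ * φ i)
            + ∑ i ∈ Finset.Ico k (M*(N+1)), (φ i)ᵀ * φ i := by
        simp only [Finset.range_eq_Ico]
        exact (Finset.sum_Ico_consecutive _ (Nat.zero_le _) hkM).symm
      have heq : (((M:ℕ):ℝ)*β) • (1 : Matrix (Fin n) (Fin n) ℝ) + (P 0)⁻¹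
          - ((P 0)⁻¹ + ∑ i ∈ Finset.range k, (φ i)ᵀ * φ i)
          = ((((M:ℕ):ℝ)*β) • (1 : Matrix (Fin n) (Fin n) ℝ)
              - ∑ i ∈ Finset.range (M*(N+1)), (φ i)ᵀ * φ i)
            + ∑ i ∈ Finset.Ico k (M*(N+1)), (φ i)ᵀ * φ i := by
        rw [hs2]; abel
      rw [heq]
      exact (hup M).add (hIcoPSD _ _)
  refine ⟨fun k _ => hmain k, ?_⟩
  -- convergence
  refine tendsto_pi_nhds.2 ?_
  intro i
  rw [tendsto_pi_nhds]
  intro j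
  simp only [Pi.zero_apply, Matrix.zero_apply]
  apply squeeze_zero_norm' (a := fun k : ℕ => (((k/(N+1) : ℕ):ℝ) * α)⁻¹)
  · filter_upwards [Filter.eventually_ge_atTop (N+1)] with k hk
    set m := k / (N+1) with hm
    have hm1 : 1 ≤ m := (Nat.one_le_div_iff (show 0 < N + 1 by omega)).2 hk
    have hmpos : (0:ℝ) < (m:ℝ) := by exact_mod_cast hm1
    have hc : 0 < (m:ℝ) * α := mul_pos hmpos hα
    have hA : ((P k)⁻¹ - ((m:ℝ)*α) • (1 : Matrix (Fin n) (Fin n) ℝ)).PosSemidef := by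
      have h0 := (hmain k).1
      rw [floor_eq_natdiv, ← hm] at h0
      have := h0.add ((hPk 0).inv.posSemidef)
      rwa [sub_add_cancel] at this
    have hinv := inv_loewner (hPk k) hc hA
    have := entry_bound (hPk k).posSemidef hinv i j
    simpa [Real.norm_eq_abs] using this
  · apply Filter.Tendsto.inv_tendsto_atTop
    apply Filter.Tendsto.atTop_mul_const hα
    apply tendsto_natCast_atTop_atTop.comp
    exact Filter.tendsto_atTop_atTop.2 fun b =>
      ⟨b * (N+1), fun a ha => (Nat.le_div_iff_mul_le (show 0 < N + 1 by omega)).2 ha⟩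
end

section
/- Let (φ_k)_{k=0}^∞ ⊂ ℝ^{p×n} be persistently exciting with constants N, α, β as in the definition, let R ∈ ℝ^{n×n} be positive definite, set P_0 := R^{-1}, let λ ∈ (0,1), and let (P_k)_{k=0}^∞ satisfy the RLS covariance recursion P_{k+1}^{-1} = λ P_k^{-1} + φ_k^T φ_k. Then for all k ≥ N+1, (λ^N (1−λ) α / (1 − λ^{N+1}))·I_n ≤ P_k^{-1} ≤ (β / (1 − λ^{N+1}))·I_n + P_N^{-1} in the Loewner order. -/
open Matrix

namespace Stmt6Aux
variable {d : ℕ}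

lemma psd_add {A B : Matrix (Fin d) (Fin d) ℝ} (hA : A.PosSemidef) (hB : B.PosSemidef) :
    (A + B).PosSemidef := by
  refine ⟨hA.1.add hB.1, fun x => ?_⟩
  simpa [mul_add, add_mul] using add_nonneg (hA.2 x) (hB.2 x)

lemma psd_smul {A : Matrix (Fin d) (Fin d) ℝ} (hA : A.PosSemidef) {c : ℝ} (hc : 0 ≤ c) :
    (c • A).PosSemidef := by
  refine ⟨by rw [Matrix.IsHermitian, Matrix.conjTranspose_smul, star_trivial, hA.1], fun x => ?_⟩
  exact (hA.smul hc).2 x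

lemma psd_sum {ι : Type*} {s : Finset ι} {f : ι → Matrix (Fin d) (Fin d) ℝ}
    (h : ∀ i ∈ s, (f i).PosSemidef) : (∑ i ∈ s, f i).PosSemidef := by
  classical
  induction s using Finset.induction_on with
  | empty => simpa using Matrix.PosSemidef.zero
  | insert _ _ hns ih =>
    rw [Finset.sum_insert hns]
    exact psd_add (h _ (Finset.mem_insert_self _ _)) (ih fun i hi => h i (Finset.mem_insert_of_mem hi))

lemma key (N : ℕ) (lam β : ℝ) (hlam0 : 0 < lam) (hlam1 : lam < 1) (hβ : 0 < β)
    (A : ℕ → Matrix (Fin d) (Fin d) ℝ) (hA : ∀ i, (A i).PosSemidef)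
    (hPE : ∀ j, (β • (1 : Matrix (Fin d) (Fin d) ℝ)
        - ∑ i ∈ Finset.Icc j (j + N), A i).PosSemidef) :
    ∀ m, ((β / (1 - lam ^ (N + 1))) • (1 : Matrix (Fin d) (Fin d) ℝ)
       - ∑ i ∈ Finset.range m, lam ^ (m - 1 - i) • A (N + i)).PosSemidef := by
  have hpow : ∀ t : ℕ, lam ^ t ≤ 1 := fun t => pow_le_one₀ hlam0.le hlam1.le
  have hden : 0 < 1 - lam ^ (N + 1) := by
    have : lam ^ (N + 1) < 1 := pow_lt_one₀ hlam0.le hlam1 (Nat.succ_ne_zero N)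
    linarith
  set c : ℝ := β / (1 - lam ^ (N + 1)) with hc
  have hcβ : β ≤ c := by
    rw [hc, le_div_iff₀ hden]
    nlinarith [hpow (N + 1), pow_pos hlam0 (N + 1)]
  have hceq : lam ^ (N + 1) * c + β = c := by
    rw [hc]; field_simp; ring
  intro m
  induction m using Nat.strong_induction_on with
  | _ m ih =>
    rcases le_or_gt m (N + 1) with hm | hm
    · -- base case : m ≤ N + 1
      have e1 : ∑ i ∈ Finset.range m, (1 - lam ^ (m - 1 - i)) • A (N + i)
          = ∑ i ∈ Finset.range m, A (N + i)
            - ∑ i ∈ Finset.range m, lam ^ (m - 1 - i) • A (N + i) := by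
        rw [← Finset.sum_sub_distrib]
        exact Finset.sum_congr rfl fun i _ => by rw [sub_smul, one_smul]
      have hsplit : ∑ i ∈ Finset.range (N + 1), A (N + i)
          = ∑ i ∈ Finset.range m, A (N + i) + ∑ i ∈ Finset.Ico m (N + 1), A (N + i) := by
        rw [Finset.range_eq_Ico, Finset.range_eq_Ico]
        exact (Finset.sum_Ico_consecutive (fun i => A (N + i)) (Nat.zero_le m) hm).symm
      have hPE' : (β • (1 : Matrix (Fin d) (Fin d) ℝ)
          - ∑ i ∈ Finset.range (N + 1), A (N + i)).PosSemidef := by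
        have h0 := hPE N
        rw [← Finset.Ico_add_one_right_eq_Icc, Finset.sum_Ico_eq_sum_range,
          show N + N + 1 - N = N + 1 from by omega] at h0
        exact h0
      have heq : c • (1 : Matrix (Fin d) (Fin d) ℝ)
            - ∑ i ∈ Finset.range m, lam ^ (m - 1 - i) • A (N + i)
          = (c - β) • (1 : Matrix (Fin d) (Fin d) ℝ)
            + (β • (1 : Matrix (Fin d) (Fin d) ℝ) - ∑ i ∈ Finset.range (N + 1), A (N + i))
            + ∑ i ∈ Finset.range m, (1 - lam ^ (m - 1 - i)) • A (N + i)
            + ∑ i ∈ Finset.Ico m (N + 1), A (N + i) := by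
        rw [e1, hsplit, sub_smul]; abel
      rw [heq]
      refine psd_add (psd_add (psd_add (psd_smul Matrix.PosSemidef.one (by linarith)) hPE')
        (psd_sum fun i _ => psd_smul (hA _) (by have := hpow (m - 1 - i); linarith)))
        (psd_sum fun i _ => hA _)
    · -- step : m > N + 1
      set m' := m - (N + 1) with hm'
      have hmm : m = m' + (N + 1) := by omega
      have hm'lt : m' < m := by omega
      have hsplitS : ∑ i ∈ Finset.range m, lam ^ (m - 1 - i) • A (N + i)
          = lam ^ (N + 1) • ∑ i ∈ Finset.range m', lam ^ (m' - 1 - i) • A (N + i)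
            + ∑ i ∈ Finset.range (N + 1), lam ^ (m - 1 - (m' + i)) • A (N + (m' + i)) := by
        rw [Finset.range_eq_Ico,
          ← Finset.sum_Ico_consecutive (fun i => lam ^ (m - 1 - i) • A (N + i))
            (Nat.zero_le m') (le_of_lt hm'lt)]
        congr 1
        · rw [← Finset.range_eq_Ico, Finset.smul_sum]
          refine Finset.sum_congr rfl fun i hi => ?_
          have hi' : i < m' := Finset.mem_range.mp hi
          rw [smul_smul, ← pow_add, show N + 1 + (m' - 1 - i) = m - 1 - i from by omega]
        · rw [Finset.sum_Ico_eq_sum_range, show m - m' = N + 1 from by omega]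
      have hPE' : (β • (1 : Matrix (Fin d) (Fin d) ℝ)
          - ∑ i ∈ Finset.range (N + 1), A (N + (m' + i))).PosSemidef := by
        have h0 := hPE (N + m')
        rw [← Finset.Ico_add_one_right_eq_Icc, Finset.sum_Ico_eq_sum_range,
          show N + m' + N + 1 - (N + m') = N + 1 from by omega] at h0
        simp only [Nat.add_assoc] at h0
        exact h0
      have e1 : ∑ i ∈ Finset.range (N + 1), (1 - lam ^ (m - 1 - (m' + i))) • A (N + (m' + i))
          = ∑ i ∈ Finset.range (N + 1), A (N + (m' + i))
            - ∑ i ∈ Finset.range (N + 1), lam ^ (m - 1 - (m' + i)) • A (N + (m' + i)) := by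
        rw [← Finset.sum_sub_distrib]
        exact Finset.sum_congr rfl fun i _ => by rw [sub_smul, one_smul]
      have hsc : c • (1 : Matrix (Fin d) (Fin d) ℝ)
          = (lam ^ (N + 1) * c) • (1 : Matrix (Fin d) (Fin d) ℝ)
            + β • (1 : Matrix (Fin d) (Fin d) ℝ) := by
        rw [← add_smul, hceq]
      have heq : c • (1 : Matrix (Fin d) (Fin d) ℝ)
            - ∑ i ∈ Finset.range m, lam ^ (m - 1 - i) • A (N + i)
          = lam ^ (N + 1) • (c • (1 : Matrix (Fin d) (Fin d) ℝ)
              - ∑ i ∈ Finset.range m', lam ^ (m' - 1 - i) • A (N + i))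
            + (β • (1 : Matrix (Fin d) (Fin d) ℝ)
              - ∑ i ∈ Finset.range (N + 1), A (N + (m' + i)))
            + ∑ i ∈ Finset.range (N + 1), (1 - lam ^ (m - 1 - (m' + i))) • A (N + (m' + i)) := by
        rw [hsplitS, e1, smul_sub, smul_smul]
        nth_rewrite 1 [hsc]
        abel
      rw [heq]
      refine psd_add (psd_add (psd_smul (ih m' hm'lt) (by positivity)) hPE')
        (psd_sum fun i _ => psd_smul (hA _) (by have := hpow (m - 1 - (m' + i)); linarith))

lemma psd_tmul {p : ℕ} (A : Matrix (Fin p) (Fin d) ℝ) : (Aᵀ * A).PosSemidef := by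
  simpa [Matrix.conjTranspose_eq_transpose_of_trivial] using
    Matrix.posSemidef_conjTranspose_mul_self A

variable {d : ℕ}

lemma unroll (lam : ℝ) (Q A : ℕ → Matrix (Fin d) (Fin d) ℝ)
    (hrec : ∀ k, Q (k + 1) = lam • Q k + A k) :
    ∀ m k, Q (k + m) = lam ^ m • Q k +
      ∑ i ∈ Finset.range m, lam ^ (m - 1 - i) • A (k + i) := by
  intro m
  induction m with
  | zero => intro k; simp
  | succ m ih =>
    intro k
    have h1 : k + (m + 1) = (k + m) + 1 := by ring
    rw [h1, hrec, ih k, Finset.sum_range_succ]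
    rw [smul_add, smul_smul, Finset.smul_sum, ← pow_succ']
    have h2 : ∀ i ∈ Finset.range m,
        lam • lam ^ (m - 1 - i) • A (k + i) = lam ^ (m + 1 - 1 - i) • A (k + i) := by
      intro i hi
      have hi' : i < m := Finset.mem_range.mp hi
      have : m - 1 - i + 1 = m + 1 - 1 - i := by omega
      rw [smul_smul, ← pow_succ', this]
    rw [Finset.sum_congr rfl h2]
    have h3 : lam ^ (m + 1 - 1 - m) • A (k + m) = A (k + m) := by
      simp
    rw [h3]
    abel

end Stmt6Aux

theorem stmt6 {n p : ℕ} (N : ℕ) (α β : ℝ) (hα : 0 < α) (hβ : 0 < β)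
    (hN : (n : ℝ) ≤ (N : ℝ) * (p : ℝ))
    (φ : ℕ → Matrix (Fin p) (Fin n) ℝ)
    (hPE : ∀ j : ℕ,
      ((∑ i ∈ Finset.Icc j (j + N), (φ i)ᵀ * φ i) -
        α • (1 : Matrix (Fin n) (Fin n) ℝ)).PosSemidef ∧
      (β • (1 : Matrix (Fin n) (Fin n) ℝ) -
        ∑ i ∈ Finset.Icc j (j + N), (φ i)ᵀ * φ i).PosSemidef)
    (R : Matrix (Fin n) (Fin n) ℝ) (hR : R.PosDef)
    (lam : ℝ) (hlam : lam ∈ Set.Ioo (0 : ℝ) 1)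
    (P : ℕ → Matrix (Fin n) (Fin n) ℝ) (hP0 : P 0 = R⁻¹) (hPk : ∀ k, (P k).PosDef)
    (hrec : ∀ k, (P (k + 1))⁻¹ = lam • (P k)⁻¹ + (φ k)ᵀ * φ k) :
    ∀ k, N + 1 ≤ k →
      ((P k)⁻¹ -
        (lam ^ N * (1 - lam) * α / (1 - lam ^ (N + 1))) •
          (1 : Matrix (Fin n) (Fin n) ℝ)).PosSemidef ∧
      ((β / (1 - lam ^ (N + 1))) • (1 : Matrix (Fin n) (Fin n) ℝ) +
        (P N)⁻¹ - (P k)⁻¹).PosSemidef := by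
  obtain ⟨hlam0, hlam1⟩ := hlam
  have hpow1 : ∀ t : ℕ, lam ^ t ≤ 1 := fun t => pow_le_one₀ hlam0.le hlam1.le
  have hden : 0 < 1 - lam ^ (N + 1) := by
    have : lam ^ (N + 1) < 1 := pow_lt_one₀ hlam0.le hlam1 (Nat.succ_ne_zero N)
    linarith
  set A : ℕ → Matrix (Fin n) (Fin n) ℝ := fun i => (φ i)ᵀ * φ i with hAdef
  have hA : ∀ i, (A i).PosSemidef := fun i => Stmt6Aux.psd_tmul (φ i)
  have hunroll := Stmt6Aux.unroll lam (fun k => (P k)⁻¹) A hrec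
  intro k hk
  constructor
  · -- lower bound
    set c : ℝ := lam ^ N * (1 - lam) * α / (1 - lam ^ (N + 1)) with hcdef
    set j : ℕ := k - (N + 1) with hjdef
    have hkj : k = j + (N + 1) := by omega
    have hu := hunroll (N + 1) j
    have hre : ∑ i ∈ Finset.Icc j (j + N), A i
        = ∑ i ∈ Finset.range (N + 1), A (j + i) := by
      rw [← Finset.Ico_add_one_right_eq_Icc, Finset.sum_Ico_eq_sum_range,
        show j + N + 1 - j = N + 1 from by omega]
    have e1 : ∑ i ∈ Finset.range (N + 1), (lam ^ (N + 1 - 1 - i) - lam ^ N) • A (j + i)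
        = ∑ i ∈ Finset.range (N + 1), lam ^ (N + 1 - 1 - i) • A (j + i)
          - lam ^ N • ∑ i ∈ Finset.range (N + 1), A (j + i) := by
      rw [Finset.smul_sum, ← Finset.sum_sub_distrib]
      exact Finset.sum_congr rfl fun i _ => by rw [sub_smul]
    have hcle : c ≤ lam ^ N * α := by
      rw [hcdef, div_le_iff₀ hden]
      have h1 : lam ^ (N + 1) ≤ lam := by
        calc lam ^ (N + 1) ≤ lam ^ 1 := pow_le_pow_of_le_one hlam0.le hlam1.le (by omega)
        _ = lam := pow_one lam
      nlinarith [mul_nonneg (mul_nonneg (pow_nonneg hlam0.le N) hα.le) (sub_nonneg.mpr h1)]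
    have heq : (P k)⁻¹ - c • (1 : Matrix (Fin n) (Fin n) ℝ)
        = lam ^ (N + 1) • (P j)⁻¹
          + ∑ i ∈ Finset.range (N + 1), (lam ^ (N + 1 - 1 - i) - lam ^ N) • A (j + i)
          + lam ^ N • (∑ i ∈ Finset.Icc j (j + N), A i
              - α • (1 : Matrix (Fin n) (Fin n) ℝ))
          + (lam ^ N * α - c) • (1 : Matrix (Fin n) (Fin n) ℝ) := by
      rw [show k = j + (N + 1) from hkj, hu, e1, hre, smul_sub, smul_smul, sub_smul]
      abel
    rw [heq]
    refine Stmt6Aux.psd_add (Stmt6Aux.psd_add (Stmt6Aux.psd_add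
      (Stmt6Aux.psd_smul (hPk j).inv.posSemidef (pow_nonneg hlam0.le _))
      (Stmt6Aux.psd_sum fun i hi => Stmt6Aux.psd_smul (hA _) ?_))
      (Stmt6Aux.psd_smul ((hPE j).1) (pow_nonneg hlam0.le _)))
      (Stmt6Aux.psd_smul Matrix.PosSemidef.one (by linarith))
    have hi' : i < N + 1 := Finset.mem_range.mp hi
    have : lam ^ N ≤ lam ^ (N + 1 - 1 - i) :=
      pow_le_pow_of_le_one hlam0.le hlam1.le (by omega)
    linarith
  · -- upper bound
    set m : ℕ := k - N with hmdef
    have hkm : k = N + m := by omega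
    have hu := hunroll m N
    have hkey := Stmt6Aux.key N lam β hlam0 hlam1 hβ A hA (fun j => (hPE j).2) m
    have heq : (β / (1 - lam ^ (N + 1))) • (1 : Matrix (Fin n) (Fin n) ℝ)
          + (P N)⁻¹ - (P k)⁻¹
        = ((β / (1 - lam ^ (N + 1))) • (1 : Matrix (Fin n) (Fin n) ℝ)
            - ∑ i ∈ Finset.range m, lam ^ (m - 1 - i) • A (N + i))
          + ((1 : ℝ) - lam ^ m) • (P N)⁻¹ := by
      rw [show k = N + m from hkm, hu, sub_smul, one_smul]
      abel
    rw [heq]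
    exact Stmt6Aux.psd_add hkey
      (Stmt6Aux.psd_smul (hPk N).inv.posSemidef (by have := hpow1 m; linarith))
end

section
/- Let (φ_k)_{k=0}^∞ ⊂ ℝ^{p×n}, let R ∈ ℝ^{n×n} be positive definite, set P_0 := R^{-1}, let λ ∈ (0,1), and let (P_k)_{k=0}^∞ satisfy the RLS covariance recursion P_{k+1}^{-1} = λ P_k^{-1} + φ_k^T φ_k. Suppose there exist ᾱ, β̄ ∈ (0,∞) such that for all k ≥ 0, ᾱ·I_n ≤ P_k^{-1} ≤ β̄·I_n. Let N be an integer with N ≥ (λβ̄ − ᾱ)/((1−λ)ᾱ). Then for all j ≥ 0, ((1 + (1−λ)N)ᾱ − λβ̄)·I_n ≤ Σ_{i=j}^{j+N} φ_i^T φ_i ≤ ((1 − λ^{N+1})/(λ^N(1−λ))) β̄ · I_n in the Loewner order; consequently, (φ_k)_{k=0}^∞ is persistently exciting. -/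
open Matrix Finset

section helpers
variable {n : ℕ}

lemma psd_add {A B : Matrix (Fin n) (Fin n) ℝ} (hA : A.PosSemidef) (hB : B.PosSemidef) :
    (A + B).PosSemidef := by
  exact hA.add hB

lemma psd_smul {A : Matrix (Fin n) (Fin n) ℝ} {c : ℝ} (hc : 0 ≤ c) (hA : A.PosSemidef) :
    (c • A).PosSemidef := by
  exact hA.smul hc

lemma psd_zero : (0 : Matrix (Fin n) (Fin n) ℝ).PosSemidef :=
  ⟨Matrix.isHermitian_zero, fun x => by simp⟩

lemma psd_one : (1 : Matrix (Fin n) (Fin n) ℝ).PosSemidef :=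
  Matrix.PosSemidef.one

lemma psd_sum (s : Finset ℕ) (f : ℕ → Matrix (Fin n) (Fin n) ℝ)
    (h : ∀ i ∈ s, (f i).PosSemidef) : (∑ i ∈ s, f i).PosSemidef := by
  classical
  induction s using Finset.induction with
  | empty => simpa using psd_zero
  | @insert a s ha ih =>
    rw [Finset.sum_insert ha]
    exact psd_add (h a (Finset.mem_insert_self a s))
      (ih fun i hi => h i (Finset.mem_insert_of_mem hi))

end helpers

theorem stmt7 {n p : ℕ} (lam : ℝ) (hlam : lam ∈ Set.Ioo (0 : ℝ) 1)
    (φ : ℕ → Matrix (Fin p) (Fin n) ℝ)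
    (R : Matrix (Fin n) (Fin n) ℝ) (hR : R.PosDef)
    (P : ℕ → Matrix (Fin n) (Fin n) ℝ) (hP0 : P 0 = R⁻¹) (hPk : ∀ k, (P k).PosDef)
    (hrec : ∀ k, (P (k + 1))⁻¹ = lam • (P k)⁻¹ + (φ k)ᵀ * φ k)
    (α' β' : ℝ) (hα' : 0 < α') (hβ' : 0 < β')
    (hbound : ∀ k,
      ((P k)⁻¹ - α' • (1 : Matrix (Fin n) (Fin n) ℝ)).PosSemidef ∧
      (β' • (1 : Matrix (Fin n) (Fin n) ℝ) - (P k)⁻¹).PosSemidef)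
    (N : ℕ) (hN : (lam * β' - α') / ((1 - lam) * α') ≤ (N : ℝ)) :
    (∀ j : ℕ,
      ((∑ i ∈ Finset.Icc j (j + N), (φ i)ᵀ * φ i) -
        ((1 + (1 - lam) * (N : ℝ)) * α' - lam * β') •
          (1 : Matrix (Fin n) (Fin n) ℝ)).PosSemidef ∧
      ((((1 - lam ^ (N + 1)) / (lam ^ N * (1 - lam))) * β') •
          (1 : Matrix (Fin n) (Fin n) ℝ) -
        ∑ i ∈ Finset.Icc j (j + N), (φ i)ᵀ * φ i).PosSemidef) ∧
    (∃ N' : ℕ, (n : ℝ) ≤ (N' : ℝ) * (p : ℝ) ∧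
      ∃ α β : ℝ, 0 < α ∧ 0 < β ∧ ∀ j : ℕ,
        ((∑ i ∈ Finset.Icc j (j + N'), (φ i)ᵀ * φ i) -
          α • (1 : Matrix (Fin n) (Fin n) ℝ)).PosSemidef ∧
        (β • (1 : Matrix (Fin n) (Fin n) ℝ) -
          ∑ i ∈ Finset.Icc j (j + N'), (φ i)ᵀ * φ i).PosSemidef) := by
  obtain ⟨hl0, hl1⟩ := hlam
  have hkey : ∀ k, (φ k)ᵀ * φ k = (P (k+1))⁻¹ - lam • (P k)⁻¹ := fun k => by
    rw [hrec k, add_sub_cancel_left]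
  -- telescoping identity
  have hsum : ∀ j M, ∑ i ∈ Finset.Icc j (j+M), (φ i)ᵀ * φ i
      = (P (j+M+1))⁻¹ - lam • (P j)⁻¹
        + (1-lam) • ∑ i ∈ Finset.Icc (j+1) (j+M), (P i)⁻¹ := by
    intro j M
    induction M with
    | zero => simp [hkey]
    | succ M ih =>
      have e1 : j + (M+1) = (j+M) + 1 := by omega
      rw [e1, Finset.sum_Icc_succ_top (by omega : j ≤ j+M+1),
          Finset.sum_Icc_succ_top (by omega : j+1 ≤ j+M+1), ih, hkey]
      have e2 : j + M + 1 + 1 = j + (M + 1) + 1 := by omega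
      rw [e2]
      module
  have hM'N : lam * β' - α' ≤ (1-lam) * α' * (N:ℝ) := by
    rw [div_le_iff₀ (by nlinarith)] at hN; linarith
  -- lower bound lemma
  have lower : ∀ (M : ℕ), (lam * β' - α') / ((1 - lam) * α') ≤ (M:ℝ) →
      ∀ j, ((∑ i ∈ Finset.Icc j (j+M), (φ i)ᵀ * φ i) -
        ((1 + (1 - lam) * (M : ℝ)) * α' - lam * β') •
          (1 : Matrix (Fin n) (Fin n) ℝ)).PosSemidef := by
    intro M hM j
    have e : (∑ i ∈ Finset.Icc j (j+M), (φ i)ᵀ * φ i) -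
        ((1 + (1 - lam) * (M : ℝ)) * α' - lam * β') • (1 : Matrix (Fin n) (Fin n) ℝ)
        = ((P (j+M+1))⁻¹ - α' • 1) + lam • (β' • 1 - (P j)⁻¹)
          + (1-lam) • ∑ i ∈ Finset.Icc (j+1) (j+M), ((P i)⁻¹ - α' • (1 : Matrix (Fin n) (Fin n) ℝ)) := by
      rw [hsum j M, Finset.sum_sub_distrib, Finset.sum_const, Nat.card_Icc,
          show j + M + 1 - (j+1) = M by omega, ← Nat.cast_smul_eq_nsmul ℝ]
      module
    rw [e]
    exact psd_add (psd_add (hbound _).1 (psd_smul hl0.le (hbound _).2))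
      (psd_smul (by linarith) (psd_sum _ _ fun i _ => (hbound i).1))
  -- simple upper bound lemma
  have upperB : ∀ (M : ℕ) (j : ℕ),
      ((((M:ℝ)+1) * β') • (1 : Matrix (Fin n) (Fin n) ℝ) -
        ∑ i ∈ Finset.Icc j (j+M), (φ i)ᵀ * φ i).PosSemidef := by
    intro M j
    have e : (((M:ℝ)+1) * β') • (1 : Matrix (Fin n) (Fin n) ℝ) -
        ∑ i ∈ Finset.Icc j (j+M), (φ i)ᵀ * φ i
        = ∑ i ∈ Finset.Icc j (j+M),
            ((β' • (1 : Matrix (Fin n) (Fin n) ℝ) - (P (i+1))⁻¹) + lam • (P i)⁻¹) := by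
      have e2 : ∀ i, (β' • (1 : Matrix (Fin n) (Fin n) ℝ) - (P (i+1))⁻¹) + lam • (P i)⁻¹
          = β' • (1 : Matrix (Fin n) (Fin n) ℝ) - (φ i)ᵀ * φ i := by
        intro i; rw [hkey]; module
      rw [Finset.sum_congr rfl fun i _ => e2 i, Finset.sum_sub_distrib, Finset.sum_const,
          Nat.card_Icc, show j + M + 1 - j = M + 1 by omega, ← Nat.cast_smul_eq_nsmul ℝ]
      push_cast
      module
    rw [e]
    exact psd_sum _ _ fun i _ => psd_add (hbound _).2 (psd_smul hl0.le (hPk i).inv.posSemidef)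
  -- upper constant comparison
  have hC : ∀ (M : ℕ), ((M:ℝ)+1) * β' ≤ (1 - lam ^ (M + 1)) / (lam ^ M * (1 - lam)) * β' := by
    intro M
    have hgs : (1 - lam^(M+1)) = (1-lam) * ∑ k ∈ Finset.range (M+1), lam^k := by
      linear_combination geom_sum_mul lam (M+1)
    have hSge : ((M:ℝ)+1) * lam^M ≤ ∑ k ∈ Finset.range (M+1), lam^k := by
      calc ((M:ℝ)+1) * lam^M = ∑ _k ∈ Finset.range (M+1), lam^M := by
            rw [Finset.sum_const, Finset.card_range, nsmul_eq_mul]; push_cast; ring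
        _ ≤ _ := Finset.sum_le_sum fun k hk =>
            pow_le_pow_of_le_one hl0.le hl1.le (by
              simp only [Finset.mem_range] at hk; omega)
    have hpow : (0:ℝ) < lam ^ M := pow_pos hl0 M
    have : ((M:ℝ)+1) ≤ (1 - lam ^ (M + 1)) / (lam ^ M * (1 - lam)) := by
      rw [hgs, le_div_iff₀ (by nlinarith)]
      nlinarith [hSge]
    nlinarith [this]
  constructor
  · intro j
    refine ⟨lower N hN j, ?_⟩
    have e : (((1 - lam ^ (N + 1)) / (lam ^ N * (1 - lam))) * β') •
          (1 : Matrix (Fin n) (Fin n) ℝ) -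
        ∑ i ∈ Finset.Icc j (j + N), (φ i)ᵀ * φ i
        = ((1 - lam ^ (N + 1)) / (lam ^ N * (1 - lam)) * β' - (((N:ℝ)+1) * β')) •
            (1 : Matrix (Fin n) (Fin n) ℝ)
          + ((((N:ℝ)+1) * β') • (1 : Matrix (Fin n) (Fin n) ℝ) -
            ∑ i ∈ Finset.Icc j (j + N), (φ i)ᵀ * φ i) := by
      module
    rw [e]
    exact psd_add (psd_smul (by linarith [hC N]) psd_one) (upperB N j)
  · rcases Nat.eq_zero_or_pos p with hp | hp
    · subst hp
      have hc0 : ∀ i, (φ i)ᵀ * φ i = (0 : Matrix (Fin n) (Fin n) ℝ) := fun i => by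
        ext a b; simp [Matrix.mul_apply]
      have hn : n = 0 := by
        by_contra hn
        have npos : 0 < n := Nat.pos_of_ne_zero hn
        have hlow := lower (N+1) (by push_cast; linarith) 0
        rw [Finset.sum_eq_zero (fun i _ => hc0 i), zero_sub] at hlow
        have hcpos : 0 < (1 + (1-lam)*((N:ℝ)+1))*α' - lam*β' := by push_cast; nlinarith
        have h2 := hlow.dotProduct_mulVec_nonneg (Pi.single ⟨0, npos⟩ 1)
        rw [Matrix.neg_mulVec] at h2
        simp [Matrix.smul_mulVec, Matrix.one_mulVec, dotProduct, Pi.single_apply] at h2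
        push_cast at h2
        nlinarith
      subst hn
      have triv : ∀ A : Matrix (Fin 0) (Fin 0) ℝ, A.PosSemidef := fun A =>
        ⟨by ext i; exact i.elim0, fun x => by rw [Subsingleton.elim x 0]; simp⟩
      exact ⟨0, by simp, 1, 1, one_pos, one_pos, fun j => ⟨triv _, triv _⟩⟩
    · set N' := max n (N+1) with hN'def
      have hNN' : N + 1 ≤ N' := le_max_right _ _
      have hle : (n:ℝ) ≤ (N':ℝ) * (p:ℝ) := by
        have : n ≤ N' * p := le_trans (le_max_left n (N+1)) (Nat.le_mul_of_pos_right _ hp)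
        exact_mod_cast this
      have hNle : (lam * β' - α') / ((1 - lam) * α') ≤ (N' : ℝ) := by
        refine le_trans hN ?_
        exact_mod_cast Nat.le_of_succ_le hNN'
      have hNN'r : (N:ℝ) + 1 ≤ (N':ℝ) := by exact_mod_cast hNN'
      refine ⟨N', hle, (1 + (1 - lam) * (N' : ℝ)) * α' - lam * β', ((N':ℝ)+1) * β',
        by nlinarith [mul_le_mul_of_nonneg_left hNN'r (le_of_lt (mul_pos (sub_pos.mpr hl1) hα'))], by positivity, fun j => ⟨lower N' hNle j, upperB N' j⟩⟩
end

section
/- Let (φ_k)_{k=0}^∞ ⊂ ℝ^{p×n} be persistently exciting with constants N, α, β as in the definition, let R ∈ ℝ^{n×n} be positive definite, set P_0 := R^{-1}, let λ ∈ (0,1), and let (P_k)_{k=0}^∞ satisfy the RLS covariance recursion P_{k+1}^{-1} = λ P_k^{-1} + φ_k^T φ_k. Consider the parameter-error dynamics θ̃_{k+1} = (I_n − P_{k+1} φ_k^T φ_k) θ̃_k. Then the zero solution is uniformly globally geometrically stable: there exists c > 0 such that for every k₀ ≥ N+1, every θ̃_{k₀} ∈ ℝ^n, and every k ≥ k₀,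 the solution satisfies ‖θ̃_k‖ ≤ c λ^{k−k₀} ‖θ̃_{k₀}‖. -/
open Matrix

namespace Stmt10Aux

variable {n p : ℕ}

lemma dot_self_nonneg (x : Fin n → ℝ) : 0 ≤ x ⬝ᵥ x :=
  Finset.sum_nonneg fun i _ => mul_self_nonneg _

lemma cs (x y : Fin n → ℝ) : x ⬝ᵥ y ≤ Real.sqrt (x ⬝ᵥ x) * Real.sqrt (y ⬝ᵥ y) := by
  have h := Finset.sum_mul_sq_le_sq_mul_sq Finset.univ x y
  calc x ⬝ᵥ y ≤ |x ⬝ᵥ y| := le_abs_self _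
    _ = Real.sqrt ((x ⬝ᵥ y) ^ 2) := (Real.sqrt_sq_eq_abs _).symm
    _ ≤ Real.sqrt ((x ⬝ᵥ x) * (y ⬝ᵥ y)) := by
        apply Real.sqrt_le_sqrt
        simpa [dotProduct, sq, Finset.mul_sum, mul_mul_mul_comm] using h
    _ = _ := Real.sqrt_mul (dot_self_nonneg x) _

lemma dot_transpose_mul (A : Matrix (Fin p) (Fin n) ℝ) (x y : Fin n → ℝ) :
    x ⬝ᵥ ((Aᵀ * A) *ᵥ y) = (A *ᵥ x) ⬝ᵥ (A *ᵥ y) := by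
  rw [← Matrix.mulVec_mulVec, Matrix.dotProduct_mulVec, Matrix.vecMul_transpose]

lemma sum_mulVec {ι : Type*} (s : Finset ι) (A : ι → Matrix (Fin n) (Fin n) ℝ)
    (x : Fin n → ℝ) : (∑ i ∈ s, A i) *ᵥ x = ∑ i ∈ s, (A i) *ᵥ x := by
  induction s using Finset.cons_induction with
  | empty => simp
  | cons a s ha ih => simp [Finset.sum_cons, Matrix.add_mulVec, ih]

lemma dot_sum {ι : Type*} (s : Finset ι) (x : Fin n → ℝ) (u : ι → Fin n → ℝ) :
    x ⬝ᵥ (∑ i ∈ s, u i) = ∑ i ∈ s, x ⬝ᵥ u i := by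
  induction s using Finset.cons_induction with
  | empty => simp
  | cons a s ha ih => simp [Finset.sum_cons, dotProduct_add, ih]

lemma norm_mulVec_le {Q : Matrix (Fin n) (Fin n) ℝ} (hQ : Q.PosSemidef) {M : ℝ}
    (hM : 0 ≤ M) (hub : ∀ x, x ⬝ᵥ (Q *ᵥ x) ≤ M * (x ⬝ᵥ x)) (v : Fin n → ℝ) :
    Real.sqrt ((Q *ᵥ v) ⬝ᵥ (Q *ᵥ v)) ≤ M * Real.sqrt (v ⬝ᵥ v) := by
  obtain ⟨B, hB⟩ : ∃ B : Matrix (Fin n) (Fin n) ℝ, Q = Bᴴ * B := by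
    open scoped MatrixOrder in exact CStarAlgebra.nonneg_iff_eq_star_mul_self.mp hQ.nonneg
  rw [Matrix.conjTranspose_eq_transpose_of_trivial] at hB
  set w := Q *ᵥ v with hw
  have hform : ∀ z : Fin n → ℝ, (B *ᵥ z) ⬝ᵥ (B *ᵥ z) = z ⬝ᵥ (Q *ᵥ z) := by
    intro z; rw [hB, dot_transpose_mul]
  have hkey : w ⬝ᵥ w ≤ M * Real.sqrt (w ⬝ᵥ w) * Real.sqrt (v ⬝ᵥ v) := by
    have h1 : w ⬝ᵥ w = (B *ᵥ w) ⬝ᵥ (B *ᵥ v) := by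
      calc w ⬝ᵥ w = w ⬝ᵥ (Q *ᵥ v) := rfl
        _ = (B *ᵥ w) ⬝ᵥ (B *ᵥ v) := by rw [hB, dot_transpose_mul]
    have h2 := cs (B *ᵥ w) (B *ᵥ v)
    have h3 : Real.sqrt ((B *ᵥ w) ⬝ᵥ (B *ᵥ w)) ≤ Real.sqrt M * Real.sqrt (w ⬝ᵥ w) := by
      rw [← Real.sqrt_mul hM]
      exact Real.sqrt_le_sqrt (by rw [hform]; exact hub w)
    have h4 : Real.sqrt ((B *ᵥ v) ⬝ᵥ (B *ᵥ v)) ≤ Real.sqrt M * Real.sqrt (v ⬝ᵥ v) := by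
      rw [← Real.sqrt_mul hM]
      exact Real.sqrt_le_sqrt (by rw [hform]; exact hub v)
    have h5 : (0:ℝ) ≤ Real.sqrt ((B *ᵥ w) ⬝ᵥ (B *ᵥ w)) := Real.sqrt_nonneg _
    have h6 : (0:ℝ) ≤ Real.sqrt M * Real.sqrt (v ⬝ᵥ v) :=
      mul_nonneg (Real.sqrt_nonneg _) (Real.sqrt_nonneg _)
    calc w ⬝ᵥ w = (B *ᵥ w) ⬝ᵥ (B *ᵥ v) := h1
      _ ≤ Real.sqrt ((B *ᵥ w) ⬝ᵥ (B *ᵥ w)) * Real.sqrt ((B *ᵥ v) ⬝ᵥ (B *ᵥ v)) := h2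
      _ ≤ (Real.sqrt M * Real.sqrt (w ⬝ᵥ w)) * (Real.sqrt M * Real.sqrt (v ⬝ᵥ v)) := by
          apply mul_le_mul h3 h4 (Real.sqrt_nonneg _)
          exact mul_nonneg (Real.sqrt_nonneg _) (Real.sqrt_nonneg _)
      _ = (Real.sqrt M * Real.sqrt M) * Real.sqrt (w ⬝ᵥ w) * Real.sqrt (v ⬝ᵥ v) := by ring
      _ = M * Real.sqrt (w ⬝ᵥ w) * Real.sqrt (v ⬝ᵥ v) := by rw [Real.mul_self_sqrt hM]
  rcases eq_or_lt_of_le (Real.sqrt_nonneg (w ⬝ᵥ w)) with h0 | h0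
  · rw [← h0]
    exact mul_nonneg hM (Real.sqrt_nonneg _)
  · have h7 : Real.sqrt (w ⬝ᵥ w) * Real.sqrt (w ⬝ᵥ w) ≤
        (M * Real.sqrt (v ⬝ᵥ v)) * Real.sqrt (w ⬝ᵥ w) := by
      calc Real.sqrt (w ⬝ᵥ w) * Real.sqrt (w ⬝ᵥ w) = w ⬝ᵥ w :=
            Real.mul_self_sqrt (dot_self_nonneg w)
        _ ≤ M * Real.sqrt (w ⬝ᵥ w) * Real.sqrt (v ⬝ᵥ v) := hkey
        _ = (M * Real.sqrt (v ⬝ᵥ v)) * Real.sqrt (w ⬝ᵥ w) := by ring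
    exact le_of_mul_le_mul_right h7 h0

lemma norm_inv_mulVec_le {Q : Matrix (Fin n) (Fin n) ℝ} (hQ : Q.PosDef) {m : ℝ}
    (hm : 0 < m) (hlb : ∀ x, m * (x ⬝ᵥ x) ≤ x ⬝ᵥ (Q *ᵥ x)) (w : Fin n → ℝ) :
    Real.sqrt ((Q⁻¹ *ᵥ w) ⬝ᵥ (Q⁻¹ *ᵥ w)) ≤ m⁻¹ * Real.sqrt (w ⬝ᵥ w) := by
  have hdet : IsUnit Q.det := isUnit_iff_ne_zero.mpr hQ.det_pos.ne'
  set u := Q⁻¹ *ᵥ w with hu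
  have hQu : Q *ᵥ u = w := by
    rw [hu, Matrix.mulVec_mulVec, Matrix.mul_nonsing_inv _ hdet, Matrix.one_mulVec]
  have h1 : m * (u ⬝ᵥ u) ≤ u ⬝ᵥ w := by
    have := hlb u; rwa [hQu] at this
  have h2 : u ⬝ᵥ w ≤ Real.sqrt (u ⬝ᵥ u) * Real.sqrt (w ⬝ᵥ w) := cs u w
  have huu : u ⬝ᵥ u = Real.sqrt (u ⬝ᵥ u) * Real.sqrt (u ⬝ᵥ u) :=
    (Real.mul_self_sqrt (dot_self_nonneg u)).symm
  rcases eq_or_lt_of_le (Real.sqrt_nonneg (u ⬝ᵥ u)) with h0 | h0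
  · rw [← h0]
    positivity
  · have key : m * Real.sqrt (u ⬝ᵥ u) ≤ Real.sqrt (w ⬝ᵥ w) := by
      have h3 : m * Real.sqrt (u ⬝ᵥ u) * Real.sqrt (u ⬝ᵥ u) ≤ Real.sqrt (w ⬝ᵥ w) * Real.sqrt (u ⬝ᵥ u) := by
        calc m * Real.sqrt (u ⬝ᵥ u) * Real.sqrt (u ⬝ᵥ u) = m * (u ⬝ᵥ u) := by rw [mul_assoc, ← huu]
          _ ≤ u ⬝ᵥ w := h1
          _ ≤ Real.sqrt (u ⬝ᵥ u) * Real.sqrt (w ⬝ᵥ w) := h2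
          _ = Real.sqrt (w ⬝ᵥ w) * Real.sqrt (u ⬝ᵥ u) := by ring
      exact le_of_mul_le_mul_right h3 h0
    calc Real.sqrt (u ⬝ᵥ u) = m⁻¹ * (m * Real.sqrt (u ⬝ᵥ u)) :=
          (inv_mul_cancel_left₀ hm.ne' _).symm
      _ ≤ m⁻¹ * Real.sqrt (w ⬝ᵥ w) := by
          apply mul_le_mul_of_nonneg_left key (inv_nonneg.mpr hm.le)

end Stmt10Aux
open Stmt10Aux in
theorem stmt10 {n p : ℕ} (N : ℕ) (α β : ℝ) (hα : 0 < α) (hβ : 0 < β)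
    (hN : (n : ℝ) ≤ (N : ℝ) * (p : ℝ))
    (φ : ℕ → Matrix (Fin p) (Fin n) ℝ)
    (hPE : ∀ j : ℕ,
      ((∑ i ∈ Finset.Icc j (j + N), (φ i)ᵀ * φ i) -
        α • (1 : Matrix (Fin n) (Fin n) ℝ)).PosSemidef ∧
      (β • (1 : Matrix (Fin n) (Fin n) ℝ) -
        ∑ i ∈ Finset.Icc j (j + N), (φ i)ᵀ * φ i).PosSemidef)
    (R : Matrix (Fin n) (Fin n) ℝ) (hR : R.PosDef)
    (lam : ℝ) (hlam : lam ∈ Set.Ioo (0 : ℝ) 1)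
    (P : ℕ → Matrix (Fin n) (Fin n) ℝ) (hP0 : P 0 = R⁻¹) (hPk : ∀ k, (P k).PosDef)
    (hrec : ∀ k, (P (k + 1))⁻¹ = lam • (P k)⁻¹ + (φ k)ᵀ * φ k) :
    ∃ c > (0 : ℝ), ∀ k₀, N + 1 ≤ k₀ →
      ∀ θt : ℕ → (Fin n → ℝ),
        (∀ k, θt (k + 1) =
          ((1 : Matrix (Fin n) (Fin n) ℝ) - P (k + 1) * (φ k)ᵀ * φ k) *ᵥ θt k) →
        ∀ k, k₀ ≤ k →
          Real.sqrt (θt k ⬝ᵥ θt k) ≤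
            c * lam ^ (k - k₀) * Real.sqrt (θt k₀ ⬝ᵥ θt k₀) := by
  obtain ⟨hlam0, hlam1⟩ := hlam
  have hdet : ∀ k, IsUnit (P k).det := fun k => isUnit_iff_ne_zero.mpr (hPk k).det_pos.ne'
  have hQpos : ∀ k, ((P k)⁻¹).PosDef := fun k => (hPk k).inv
  -- quadratic form abbreviations
  set q : ℕ → (Fin n → ℝ) → ℝ := fun k x => x ⬝ᵥ ((P k)⁻¹ *ᵥ x) with hqdef
  set f : ℕ → (Fin n → ℝ) → ℝ := fun k x => x ⬝ᵥ (((φ k)ᵀ * φ k) *ᵥ x) with hfdef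
  have hf0 : ∀ k x, 0 ≤ f k x := by
    intro k x
    rw [hfdef]; dsimp only
    rw [dot_transpose_mul]
    exact dot_self_nonneg _
  have hq0 : ∀ k x, 0 ≤ q k x := by
    intro k x
    simpa using (hQpos k).posSemidef.dotProduct_mulVec_nonneg x
  have hqrec : ∀ k x, q (k + 1) x = lam * q k x + f k x := by
    intro k x
    rw [hqdef, hfdef]; dsimp only
    rw [hrec k, Matrix.add_mulVec, Matrix.smul_mulVec, dotProduct_add,
      dotProduct_smul, smul_eq_mul]
  -- PE bounds as quadratic forms
  have hsumform : ∀ j x, x ⬝ᵥ ((∑ i ∈ Finset.Icc j (j + N), (φ i)ᵀ * φ i) *ᵥ x)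
      = ∑ i ∈ Finset.Icc j (j + N), f i x := by
    intro j x
    rw [Stmt10Aux.sum_mulVec, dot_sum]
  have hPElow : ∀ j x, α * (x ⬝ᵥ x) ≤ ∑ i ∈ Finset.Icc j (j + N), f i x := by
    intro j x
    have h := (hPE j).1.dotProduct_mulVec_nonneg x
    simp only [star_trivial, Matrix.sub_mulVec, dotProduct_sub,
      Matrix.smul_mulVec, Matrix.one_mulVec, dotProduct_smul,
      smul_eq_mul, sub_nonneg] at h
    rw [hsumform] at h
    exact h
  have hPEhigh : ∀ j x, ∑ i ∈ Finset.Icc j (j + N), f i x ≤ β * (x ⬝ᵥ x) := by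
    intro j x
    have h := (hPE j).2.dotProduct_mulVec_nonneg x
    simp only [star_trivial, Matrix.sub_mulVec, dotProduct_sub,
      Matrix.smul_mulVec, Matrix.one_mulVec, dotProduct_smul,
      smul_eq_mul, sub_nonneg] at h
    rw [hsumform] at h
    exact h
  have hfub : ∀ k x, f k x ≤ β * (x ⬝ᵥ x) := by
    intro k x
    refine le_trans ?_ (hPEhigh k x)
    exact Finset.single_le_sum (fun i _ => hf0 i x)
      (Finset.mem_Icc.mpr ⟨le_refl k, Nat.le_add_right k N⟩)
  -- lower bound on q
  have hlow1 : ∀ l k x, lam ^ l * (∑ i ∈ Finset.Icc k (k + l), f i x) ≤ q (k + l + 1) x := by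
    intro l
    induction l with
    | zero =>
      intro k x
      have : ∑ i ∈ Finset.Icc k (k + 0), f i x = f k x := by simp
      rw [this, pow_zero, one_mul, hqrec k x]
      have := hq0 k x
      nlinarith
    | succ l ih =>
      intro k x
      have hsplit : ∑ i ∈ Finset.Icc k (k + (l + 1)), f i x
          = (∑ i ∈ Finset.Icc k (k + l), f i x) + f (k + l + 1) x := by
        have : k + (l + 1) = (k + l) + 1 := by omega
        rw [this, Finset.sum_Icc_succ_top (by omega : k ≤ k + l + 1)]
      have hih := ih k x
      have hq := hqrec (k + l + 1) x
      have hkq : k + (l + 1) + 1 = (k + l + 1) + 1 := by omega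
      rw [hkq, hq, hsplit]
      have hS : 0 ≤ ∑ i ∈ Finset.Icc k (k + l), f i x :=
        Finset.sum_nonneg fun i _ => hf0 i x
      have hg : 0 ≤ f (k + l + 1) x := hf0 _ x
      have hpow1 : lam ^ (l + 1) ≤ 1 := pow_le_one₀ hlam0.le hlam1.le
      have hmul : lam * (lam ^ l * (∑ i ∈ Finset.Icc k (k + l), f i x)) ≤ lam * q (k + l + 1) x :=
        mul_le_mul_of_nonneg_left hih hlam0.le
      have hexp : lam ^ (l + 1) = lam * lam ^ l := by ring
      nlinarith [mul_le_mul_of_nonneg_right hpow1 hg]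
  have hm : (0:ℝ) < lam ^ N * α := mul_pos (pow_pos hlam0 N) hα
  have hlow : ∀ k, N + 1 ≤ k → ∀ x, (lam ^ N * α) * (x ⬝ᵥ x) ≤ q k x := by
    intro k hk x
    obtain ⟨j, rfl⟩ : ∃ j, k = j + N + 1 := ⟨k - (N + 1), by omega⟩
    have h1 := hlow1 N j x
    have h2 := hPElow j x
    calc (lam ^ N * α) * (x ⬝ᵥ x) = lam ^ N * (α * (x ⬝ᵥ x)) := by ring
      _ ≤ lam ^ N * (∑ i ∈ Finset.Icc j (j + N), f i x) :=
          mul_le_mul_of_nonneg_left h2 (pow_pos hlam0 N).le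
      _ ≤ q (j + N + 1) x := h1
  -- upper bound on q
  set μ : ℝ := ∑ i : Fin n, ∑ j : Fin n, |R i j| with hμdef
  have hμ0 : 0 ≤ μ :=
    Finset.sum_nonneg fun i _ => Finset.sum_nonneg fun j _ => abs_nonneg _
  have hRub : ∀ x : Fin n → ℝ, x ⬝ᵥ (R *ᵥ x) ≤ μ * (x ⬝ᵥ x) := by
    intro x
    have hbd : ∀ i j : Fin n, x i * (R i j * x j) ≤ |R i j| * (x ⬝ᵥ x) := by
      intro i j
      have hi : x i * x i ≤ x ⬝ᵥ x :=
        Finset.single_le_sum (fun i _ => mul_self_nonneg (x i)) (Finset.mem_univ i)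
      have hj : x j * x j ≤ x ⬝ᵥ x :=
        Finset.single_le_sum (fun i _ => mul_self_nonneg (x i)) (Finset.mem_univ j)
      have habs : |x i * x j| ≤ x ⬝ᵥ x := by
        rw [abs_mul]
        nlinarith [sq_nonneg (|x i| - |x j|), abs_mul_abs_self (x i), abs_mul_abs_self (x j),
          abs_nonneg (x i), abs_nonneg (x j)]
      calc x i * (R i j * x j) ≤ |x i * (R i j * x j)| := le_abs_self _
        _ = |R i j| * |x i * x j| := by rw [abs_mul, abs_mul, abs_mul]; ring
        _ ≤ |R i j| * (x ⬝ᵥ x) := mul_le_mul_of_nonneg_left habs (abs_nonneg _)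
    calc x ⬝ᵥ (R *ᵥ x) = ∑ i : Fin n, ∑ j : Fin n, x i * (R i j * x j) := by
          simp [dotProduct, Matrix.mulVec, Finset.mul_sum]
      _ ≤ ∑ i : Fin n, ∑ j : Fin n, |R i j| * (x ⬝ᵥ x) :=
          Finset.sum_le_sum fun i _ => Finset.sum_le_sum fun j _ => hbd i j
      _ = μ * (x ⬝ᵥ x) := by rw [hμdef, Finset.sum_mul]; simp [Finset.sum_mul]
  have hQ0 : (P 0)⁻¹ = R := by
    rw [hP0, Matrix.nonsing_inv_nonsing_inv _ (isUnit_iff_ne_zero.mpr hR.det_pos.ne')]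
  have hup1 : ∀ k x, q k x ≤ (μ + β * ∑ i ∈ Finset.range k, lam ^ i) * (x ⬝ᵥ x) := by
    intro k
    induction k with
    | zero =>
      intro x
      have : q 0 x = x ⬝ᵥ (R *ᵥ x) := by rw [hqdef]; dsimp only; rw [hQ0]
      rw [this]
      simpa using hRub x
    | succ k ih =>
      intro x
      rw [hqrec k x]
      have h1 := ih x
      have h2 := hfub k x
      have hxx := dot_self_nonneg x
      have hgs : ∑ i ∈ Finset.range (k + 1), lam ^ i
          = lam * ∑ i ∈ Finset.range k, lam ^ i + 1 := geom_sum_succ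
      have hμlam : lam * μ ≤ μ := by nlinarith
      have h3 : lam * q k x ≤ lam * ((μ + β * ∑ i ∈ Finset.range k, lam ^ i) * (x ⬝ᵥ x)) :=
        mul_le_mul_of_nonneg_left h1 hlam0.le
      rw [hgs]
      nlinarith
  have hgeo : ∀ k, ∑ i ∈ Finset.range k, lam ^ i ≤ 1 / (1 - lam) := by
    intro k
    have h1lam : (0:ℝ) < 1 - lam := by linarith
    have hpk : 0 ≤ lam ^ k := pow_nonneg hlam0.le k
    have hsum : (∑ i ∈ Finset.range k, lam ^ i) * (1 - lam) = 1 - lam ^ k := by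
      have h := geom_sum_mul lam k
      nlinarith [h]
    rw [le_div_iff₀ h1lam]
    rw [hsum]
    linarith
  set M : ℝ := μ + β * (1 / (1 - lam)) with hMdef
  have hMpos : 0 < M := by
    have h1lam : (0:ℝ) < 1 - lam := by linarith
    have hfrac : 0 < β * (1 / (1 - lam)) := mul_pos hβ (by positivity)
    rw [hMdef]
    linarith
  have hub : ∀ k x, q k x ≤ M * (x ⬝ᵥ x) := by
    intro k x
    refine le_trans (hup1 k x) ?_
    have hxx := dot_self_nonneg x
    have h5 : β * ∑ i ∈ Finset.range k, lam ^ i ≤ β * (1 / (1 - lam)) :=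
      mul_le_mul_of_nonneg_left (hgeo k) hβ.le
    exact mul_le_mul_of_nonneg_right (by rw [hMdef]; linarith) hxx
  -- telescoping identity
  have hkey : ∀ k, (1 : Matrix (Fin n) (Fin n) ℝ) - P (k + 1) * (φ k)ᵀ * φ k
      = lam • (P (k + 1) * (P k)⁻¹) := by
    intro k
    have h1 : P (k + 1) * (P (k + 1))⁻¹ = 1 := Matrix.mul_nonsing_inv _ (hdet (k + 1))
    have h2 : lam • (P k)⁻¹ = (P (k + 1))⁻¹ - (φ k)ᵀ * φ k := by
      rw [hrec k]; abel
    calc (1 : Matrix (Fin n) (Fin n) ℝ) - P (k + 1) * (φ k)ᵀ * φ k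
        = P (k + 1) * (P (k + 1))⁻¹ - P (k + 1) * ((φ k)ᵀ * φ k) := by
          rw [h1, Matrix.mul_assoc]
      _ = P (k + 1) * ((P (k + 1))⁻¹ - (φ k)ᵀ * φ k) := by rw [Matrix.mul_sub]
      _ = P (k + 1) * (lam • (P k)⁻¹) := by rw [h2]
      _ = lam • (P (k + 1) * (P k)⁻¹) := by rw [Matrix.mul_smul]
  refine ⟨(lam ^ N * α)⁻¹ * M, by positivity, ?_⟩
  intro k₀ hk₀ θt hθ k hk
  set v := θt k₀ with hv
  set w := (P k₀)⁻¹ *ᵥ v with hw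
  have htel : ∀ d, θt (k₀ + d) = lam ^ d • (P (k₀ + d) *ᵥ w) := by
    intro d
    induction d with
    | zero =>
      rw [Nat.add_zero, pow_zero, one_smul, hw, Matrix.mulVec_mulVec,
        Matrix.mul_nonsing_inv _ (hdet k₀), Matrix.one_mulVec]
    | succ d ih =>
      show θt (k₀ + d + 1) = lam ^ (d + 1) • (P (k₀ + d + 1) *ᵥ w)
      have hstep := hθ (k₀ + d)
      rw [ih, hkey (k₀ + d)] at hstep
      rw [hstep, Matrix.smul_mulVec, Matrix.mulVec_smul, Matrix.mulVec_mulVec,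
        Matrix.mul_assoc, Matrix.nonsing_inv_mul _ (hdet (k₀ + d)), Matrix.mul_one,
        smul_smul, ← pow_succ']
  obtain ⟨d, rfl⟩ : ∃ d, k = k₀ + d := ⟨k - k₀, by omega⟩
  have hd : k₀ + d - k₀ = d := by omega
  rw [hd, htel d]
  set u := P (k₀ + d) *ᵥ w with hu'
  have hpow : (0:ℝ) ≤ lam ^ d := pow_nonneg hlam0.le d
  have hsmul : (lam ^ d • u) ⬝ᵥ (lam ^ d • u) = (lam ^ d * lam ^ d) * (u ⬝ᵥ u) := by
    rw [smul_dotProduct, dotProduct_smul, smul_eq_mul, smul_eq_mul]; ring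
  have hsqrt1 : Real.sqrt ((lam ^ d • u) ⬝ᵥ (lam ^ d • u)) = lam ^ d * Real.sqrt (u ⬝ᵥ u) := by
    rw [hsmul, show (lam ^ d * lam ^ d) * (u ⬝ᵥ u) = (lam ^ d) ^ 2 * (u ⬝ᵥ u) by ring,
      Real.sqrt_mul (sq_nonneg _), Real.sqrt_sq hpow]
  rw [hsqrt1]
  -- bound ‖u‖ = ‖P (k₀+d) *ᵥ w‖ ≤ m⁻¹ ‖w‖
  have hPinv : P (k₀ + d) = ((P (k₀ + d))⁻¹)⁻¹ :=
    (Matrix.nonsing_inv_nonsing_inv _ (hdet (k₀ + d))).symm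
  have hu2 : Real.sqrt (u ⬝ᵥ u) ≤ (lam ^ N * α)⁻¹ * Real.sqrt (w ⬝ᵥ w) := by
    rw [hu', hPinv]
    exact norm_inv_mulVec_le (hQpos (k₀ + d)) hm (hlow (k₀ + d) (by omega)) w
  -- bound ‖w‖ ≤ M ‖v‖
  have hw2 : Real.sqrt (w ⬝ᵥ w) ≤ M * Real.sqrt (v ⬝ᵥ v) := by
    rw [hw]
    exact norm_mulVec_le (hQpos k₀).posSemidef hMpos.le (hub k₀) v
  calc lam ^ d * Real.sqrt (u ⬝ᵥ u)
      ≤ lam ^ d * ((lam ^ N * α)⁻¹ * Real.sqrt (w ⬝ᵥ w)) :=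
        mul_le_mul_of_nonneg_left hu2 hpow
    _ ≤ lam ^ d * ((lam ^ N * α)⁻¹ * (M * Real.sqrt (v ⬝ᵥ v))) := by
        apply mul_le_mul_of_nonneg_left _ hpow
        exact mul_le_mul_of_nonneg_left hw2 (inv_nonneg.mpr hm.le)
    _ = (lam ^ N * α)⁻¹ * M * lam ^ d * Real.sqrt (v ⬝ᵥ v) := by ring
end

section
/- Let (φ_k)_{k=0}^∞ ⊂ ℝ^{p×n} be persistently exciting, let R ∈ ℝ^{n×n} be positive definite, set P_0 := R^{-1}, let λ = 1, and let (P_k)_{k=0}^∞ satisfy the RLS covariance recursion P_{k+1}^{-1} = P_k^{-1} + φ_k^T φ_k. Consider the parameter-error dynamics θ̃_{k+1} = (I_n − P_{k+1} φ_k^T φ_k) θ̃_k. Then: (i) for every initial condition θ̃_0 ∈ ℝ^n, θ̃_k → 0 as k → ∞; and (ii) for every k₀ ≥ 0, every θ̃_{k₀} ∈ ℝ^n, and every k ≥ k₀, ‖θ̃_k‖ ≤ ‖P_0‖·‖P_{k₀}^{-1}‖·‖θ̃_{k₀}‖, where ‖·‖ on matrices is the spectral (operator) norm. In particular, the zero solution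 is globally asymptotically stable. -/
open Matrix

section Helpers

variable {n : ℕ}

private lemma inner_clm (A : Matrix (Fin n) (Fin n) ℝ) (u : EuclideanSpace ℝ (Fin n)) :
    inner ℝ u (toEuclideanCLM (𝕜 := ℝ) A u) =
      (WithLp.equiv 2 _ u) ⬝ᵥ (A *ᵥ (WithLp.equiv 2 _ u)) := by
  simp only [PiLp.inner_apply, RCLike.inner_apply, dotProduct]
  simp only [conj_trivial]
  exact Finset.sum_congr rfl fun i _ => mul_comm _ _

private lemma sqrt_dot (x : Fin n → ℝ) :
    Real.sqrt (x ⬝ᵥ x) = ‖(WithLp.equiv 2 ((Fin n) → ℝ)).symm x‖ := by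
  rw [EuclideanSpace.norm_eq]
  congr 1
  simp [dotProduct, Real.norm_eq_abs, sq_abs, sq]

private lemma psd_inner {A : Matrix (Fin n) (Fin n) ℝ} (hA : A.PosSemidef)
    (u : EuclideanSpace ℝ (Fin n)) :
    (0:ℝ) ≤ inner ℝ u (toEuclideanCLM (𝕜 := ℝ) A u) := by
  rw [inner_clm]
  simpa using hA.dotProduct_mulVec_nonneg (WithLp.equiv 2 (Fin n → ℝ) u)

private lemma clm_mulVec (A : Matrix (Fin n) (Fin n) ℝ) (x : Fin n → ℝ) :
    toEuclideanCLM (𝕜 := ℝ) A ((WithLp.equiv 2 _).symm x) =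
      (WithLp.equiv 2 _).symm (A *ᵥ x) := by
  exact toEuclideanCLM_toLp A x

/-- If `Q ≥ c·I` with `c > 0` and `Q` pos def, then `‖Q⁻¹‖ ≤ c⁻¹`. -/
private lemma norm_inv_le {Q : Matrix (Fin n) (Fin n) ℝ} (hQ : Q.PosDef) {c : ℝ}
    (hc : 0 < c) (h : (Q - c • 1).PosSemidef) :
    ‖toEuclideanCLM (𝕜 := ℝ) Q⁻¹‖ ≤ c⁻¹ := by
  apply ContinuousLinearMap.opNorm_le_bound _ (inv_nonneg.mpr hc.le)
  intro x
  set y := toEuclideanCLM (𝕜 := ℝ) Q⁻¹ x with hy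
  have hQy : toEuclideanCLM (𝕜 := ℝ) Q y = x := by
    rw [hy, ← ContinuousLinearMap.mul_apply, ← _root_.map_mul,
      Q.mul_nonsing_inv hQ.det_pos.ne'.isUnit, _root_.map_one, ContinuousLinearMap.one_apply]
  have h1 : (0:ℝ) ≤ inner ℝ y (toEuclideanCLM (𝕜 := ℝ) (Q - c • 1) y) := psd_inner h y
  rw [map_sub, _root_.map_smul, _root_.map_one, ContinuousLinearMap.sub_apply,
    ContinuousLinearMap.smul_apply, ContinuousLinearMap.one_apply, inner_sub_right,
    real_inner_smul_right, sub_nonneg, real_inner_self_eq_norm_mul_norm] at h1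
  have h2 : inner ℝ y (toEuclideanCLM (𝕜 := ℝ) Q y) ≤ ‖y‖ * ‖x‖ := by
    calc inner ℝ y (toEuclideanCLM (𝕜 := ℝ) Q y) ≤ ‖y‖ * ‖toEuclideanCLM (𝕜 := ℝ) Q y‖ :=
          real_inner_le_norm _ _
    _ = ‖y‖ * ‖x‖ := by rw [hQy]
  have h3 : c * (‖y‖ * ‖y‖) ≤ ‖y‖ * ‖x‖ := le_trans h1 h2
  rcases eq_or_lt_of_le (norm_nonneg y) with h0 | h0
  · rw [← h0]
    positivity
  · have h4 : c * ‖y‖ ≤ ‖x‖ := by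
      refine le_of_mul_le_mul_right ?_ h0
      calc c * ‖y‖ * ‖y‖ = c * (‖y‖ * ‖y‖) := by ring
      _ ≤ ‖y‖ * ‖x‖ := h3
      _ = ‖x‖ * ‖y‖ := by ring
    calc ‖y‖ = c⁻¹ * (c * ‖y‖) := by rw [inv_mul_cancel_left₀ hc.ne']
    _ ≤ c⁻¹ * ‖x‖ := mul_le_mul_of_nonneg_left h4 (inv_nonneg.mpr hc.le)

open scoped MatrixOrder in
/-- For `A` pos def, `A⁻¹ ≥ ‖A‖⁻¹ · I`. -/
private lemma inv_ge_norm {A : Matrix (Fin n) (Fin n) ℝ} (hA : A.PosDef) :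
    (A⁻¹ - ‖toEuclideanCLM (𝕜 := ℝ) A‖⁻¹ • 1).PosSemidef := by
  set T := toEuclideanCLM (𝕜 := ℝ) A with hT
  set S := toEuclideanCLM (𝕜 := ℝ) (CFC.sqrt A) with hSdef
  have hSsa : star S = S := by
    rw [hSdef, ← map_star, Matrix.star_eq_conjTranspose, (nonneg_iff_posSemidef.mp (CFC.sqrt_nonneg A)).1]
  have hSS : S * S = T := by
    rw [hSdef, hT, ← _root_.map_mul, CFC.sqrt_mul_sqrt_self A (nonneg_iff_posSemidef.mpr hA.posSemidef)]
  have hnorm : ‖S‖ * ‖S‖ = ‖T‖ := by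
    rw [← CStarRing.norm_star_mul_self, hSsa, hSS]
  refine Matrix.PosSemidef.of_dotProduct_mulVec_nonneg ?_ ?_
  · refine (hA.inv.isHermitian).sub ?_
    unfold Matrix.IsHermitian
    rw [conjTranspose_smul, conjTranspose_one, star_trivial]
  · intro x
    rw [star_trivial]
    have key : x ⬝ᵥ ((A⁻¹ - ‖T‖⁻¹ • 1) *ᵥ x)
        = inner ℝ ((WithLp.equiv 2 _).symm x)
            (toEuclideanCLM (𝕜 := ℝ) (A⁻¹ - ‖T‖⁻¹ • 1) ((WithLp.equiv 2 _).symm x)) := by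
      rw [inner_clm]; simp only [Equiv.apply_symm_apply]
    rw [key]
    set u : EuclideanSpace ℝ (Fin n) := (WithLp.equiv 2 _).symm x with hu
    rw [map_sub, _root_.map_smul, _root_.map_one, ContinuousLinearMap.sub_apply,
      ContinuousLinearMap.smul_apply, ContinuousLinearMap.one_apply, inner_sub_right,
      real_inner_smul_right, sub_nonneg, real_inner_self_eq_norm_mul_norm]
    set w := toEuclideanCLM (𝕜 := ℝ) A⁻¹ u with hw
    have hTw : T w = u := by
      rw [hw, hT, ← ContinuousLinearMap.mul_apply, ← _root_.map_mul,
        A.mul_nonsing_inv hA.det_pos.ne'.isUnit, _root_.map_one, ContinuousLinearMap.one_apply]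
    have hadj : ContinuousLinearMap.adjoint S = S := by
      rw [← ContinuousLinearMap.star_eq_adjoint, hSsa]
    have hq : (inner ℝ u w : ℝ) = ‖S w‖ * ‖S w‖ := by
      calc (inner ℝ u w : ℝ) = inner ℝ (S (S w)) w := by
            rw [← ContinuousLinearMap.mul_apply, hSS, hTw]
      _ = inner ℝ ((ContinuousLinearMap.adjoint S) (S w)) w := by rw [hadj]
      _ = (inner ℝ (S w) (S w) : ℝ) := ContinuousLinearMap.adjoint_inner_left S _ _
      _ = ‖S w‖ * ‖S w‖ := real_inner_self_eq_norm_mul_norm _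
    have hub : ‖u‖ ≤ ‖S‖ * ‖S w‖ := by
      calc ‖u‖ = ‖S (S w)‖ := by rw [← ContinuousLinearMap.mul_apply, hSS, hTw]
      _ ≤ ‖S‖ * ‖S w‖ := S.le_opNorm _
    have huu : ‖u‖ * ‖u‖ ≤ ‖T‖ * (inner ℝ u w : ℝ) := by
      rw [hq, ← hnorm]
      nlinarith [norm_nonneg u, norm_nonneg (S w), norm_nonneg S]
    rcases eq_or_lt_of_le (norm_nonneg T) with h0 | h0
    · have h4 : ‖u‖ * ‖u‖ ≤ 0 := by rw [← h0, zero_mul] at huu; exact huu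
      have hu0 : ‖u‖ = 0 := by nlinarith [norm_nonneg u]
      rw [hu0, mul_zero, mul_zero, hq]
      positivity
    · calc ‖T‖⁻¹ * (‖u‖ * ‖u‖) ≤ ‖T‖⁻¹ * (‖T‖ * (inner ℝ u w : ℝ)) :=
            mul_le_mul_of_nonneg_left huu (inv_nonneg.mpr h0.le)
      _ = inner ℝ u w := by rw [← mul_assoc, inv_mul_cancel₀ h0.ne', one_mul]

end Helpers

theorem stmt11 {n p : ℕ} (N : ℕ) (α β : ℝ) (hα : 0 < α) (hβ : 0 < β)
    (hN : (n : ℝ) ≤ (N : ℝ) * (p : ℝ))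
    (φ : ℕ → Matrix (Fin p) (Fin n) ℝ)
    (hPE : ∀ j : ℕ,
      ((∑ i ∈ Finset.Icc j (j + N), (φ i)ᵀ * φ i) -
        α • (1 : Matrix (Fin n) (Fin n) ℝ)).PosSemidef ∧
      (β • (1 : Matrix (Fin n) (Fin n) ℝ) -
        ∑ i ∈ Finset.Icc j (j + N), (φ i)ᵀ * φ i).PosSemidef)
    (R : Matrix (Fin n) (Fin n) ℝ) (hR : R.PosDef)
    (P : ℕ → Matrix (Fin n) (Fin n) ℝ) (hP0 : P 0 = R⁻¹) (hPk : ∀ k, (P k).PosDef)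
    (hrec : ∀ k, (P (k + 1))⁻¹ = (P k)⁻¹ + (φ k)ᵀ * φ k)
    (θt : ℕ → (Fin n → ℝ))
    (hdyn : ∀ k, θt (k + 1) =
      ((1 : Matrix (Fin n) (Fin n) ℝ) - P (k + 1) * (φ k)ᵀ * φ k) *ᵥ θt k) :
    Filter.Tendsto θt Filter.atTop (nhds 0) ∧
    ∀ k₀ k, k₀ ≤ k →
      Real.sqrt (θt k ⬝ᵥ θt k) ≤
        ‖Matrix.toEuclideanCLM (𝕜 := ℝ) (P 0)‖ *
          ‖Matrix.toEuclideanCLM (𝕜 := ℝ) ((P k₀)⁻¹)‖ *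
          Real.sqrt (θt k₀ ⬝ᵥ θt k₀) := by
  classical
  have hφ : ∀ i, ((φ i)ᵀ * φ i).PosSemidef := fun i => by
    have h := Matrix.posSemidef_conjTranspose_mul_self (φ i)
    rwa [conjTranspose_eq_transpose_of_trivial] at h
  have hRdet : IsUnit R.det := hR.det_pos.ne'.isUnit
  have hPdet : ∀ k, IsUnit (P k).det := fun k => (hPk k).det_pos.ne'.isUnit
  have hsum : ∀ k, (P k)⁻¹ = R + ∑ i ∈ Finset.range k, (φ i)ᵀ * φ i := by
    intro k
    induction k with
    | zero => simp [hP0, Matrix.nonsing_inv_nonsing_inv R hRdet]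
    | succ k ih => rw [hrec k, ih, Finset.sum_range_succ, add_assoc]
  have hsumPSD : ∀ (s : Finset ℕ), (∑ i ∈ s, (φ i)ᵀ * φ i).PosSemidef := by
    intro s
    induction s using Finset.induction with
    | empty => simpa using Matrix.PosSemidef.zero
    | insert _ _ hx ih =>
      rw [Finset.sum_insert hx]
      exact (hφ _).add ih
  have hchain : ∀ k₀ k, k₀ ≤ k → ((P k)⁻¹ - (P k₀)⁻¹).PosSemidef := by
    intro k₀ k hk
    have heq : (P k)⁻¹ - (P k₀)⁻¹ = ∑ i ∈ Finset.Ico k₀ k, (φ i)ᵀ * φ i := by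
      rw [hsum, hsum, Finset.range_eq_Ico, Finset.range_eq_Ico,
        ← Finset.sum_Ico_consecutive _ (Nat.zero_le k₀) hk]
      abel
    rw [heq]
    exact hsumPSD _
  have hid : ∀ k₀ k, k₀ ≤ k → θt k = (P k * (P k₀)⁻¹) *ᵥ θt k₀ := by
    intro k₀ k hk
    induction k, hk using Nat.le_induction with
    | base => rw [Matrix.mul_nonsing_inv _ (hPdet k₀), one_mulVec]
    | succ k hk ih =>
      have h1 : (P k)⁻¹ = (P (k+1))⁻¹ - (φ k)ᵀ * φ k := by
        rw [hrec k, add_sub_cancel_right]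
      have hstep : (1 : Matrix (Fin n) (Fin n) ℝ) - P (k+1) * (φ k)ᵀ * φ k
          = P (k+1) * (P k)⁻¹ := by
        rw [h1, Matrix.mul_sub, Matrix.mul_nonsing_inv _ (hPdet (k+1)), Matrix.mul_assoc]
      rw [hdyn k, hstep, ih, mulVec_mulVec, Matrix.mul_assoc (P (k+1)),
        ← Matrix.mul_assoc ((P k)⁻¹), Matrix.nonsing_inv_mul _ (hPdet k), Matrix.one_mul]
  rcases Nat.eq_zero_or_pos n with hn | hn
  · subst hn
    constructor
    · have h0 : θt = fun _ => 0 := funext fun k => Subsingleton.elim _ _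
      rw [h0]
      exact tendsto_const_nhds
    · intro k₀ k hk
      have h1 : θt k ⬝ᵥ θt k = 0 := by simp [dotProduct]
      have h2 : θt k₀ ⬝ᵥ θt k₀ = 0 := by simp [dotProduct]
      rw [h1, h2, Real.sqrt_zero, mul_zero]
  haveI : Nonempty (Fin n) := ⟨⟨0, hn⟩⟩
  have hP0norm : 0 < ‖toEuclideanCLM (𝕜 := ℝ) (P 0)‖ := by
    rw [norm_pos_iff]
    intro hzero
    have hP00 : P 0 = 0 := by
      have h5 : toEuclideanCLM (𝕜 := ℝ) (P 0) = toEuclideanCLM (𝕜 := ℝ) (0 : Matrix (Fin n) (Fin n) ℝ) := by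
        rw [hzero, map_zero]
      exact (Matrix.toEuclideanCLM (𝕜 := ℝ) (n := Fin n)).injective h5
    have hx : (fun _ : Fin n => (1:ℝ)) ≠ 0 := by
      intro hc
      have := congrFun hc (Classical.arbitrary (Fin n))
      simpa using this
    have := (hPk 0).dotProduct_mulVec_pos hx
    rw [hP00] at this
    simp at this
  have hPbound : ∀ k, ‖toEuclideanCLM (𝕜 := ℝ) (P k)‖ ≤ ‖toEuclideanCLM (𝕜 := ℝ) (P 0)‖ := by
    intro k
    have hc : 0 < (‖toEuclideanCLM (𝕜 := ℝ) (P 0)‖)⁻¹ := inv_pos.mpr hP0norm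
    have hpsd : ((P k)⁻¹ - (‖toEuclideanCLM (𝕜 := ℝ) (P 0)‖)⁻¹ • 1).PosSemidef := by
      have h3 := (hchain 0 k (Nat.zero_le k)).add (inv_ge_norm (hPk 0))
      have heq : (P k)⁻¹ - (‖toEuclideanCLM (𝕜 := ℝ) (P 0)‖)⁻¹ • 1
          = ((P k)⁻¹ - (P 0)⁻¹) + ((P 0)⁻¹ - (‖toEuclideanCLM (𝕜 := ℝ) (P 0)‖)⁻¹ • 1) := by
        abel
      rw [heq]
      exact h3
    have h4 := norm_inv_le ((hPk k).inv) hc hpsd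
    rwa [Matrix.nonsing_inv_nonsing_inv _ (hPdet k), inv_inv] at h4
  constructor
  · -- Tendsto
    set v := toEuclideanCLM (𝕜 := ℝ) ((P 0)⁻¹) ((WithLp.equiv 2 ((Fin n) → ℝ)).symm (θt 0))
      with hv
    have hψ : ∀ k, (WithLp.equiv 2 ((Fin n) → ℝ)).symm (θt k)
        = toEuclideanCLM (𝕜 := ℝ) (P k) v := by
      intro k
      rw [hv, hid 0 k (Nat.zero_le k), ← mulVec_mulVec, ← clm_mulVec, ← clm_mulVec]
    have hblock : ∀ m : ℕ, ((∑ i ∈ Finset.range (m*(N+1)), (φ i)ᵀ * φ i)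
        - ((m:ℝ) * α) • 1).PosSemidef := by
      intro m
      induction m with
      | zero => simpa using Matrix.PosSemidef.zero
      | succ m ih =>
        have hsplit : ∑ i ∈ Finset.range ((m+1)*(N+1)), (φ i)ᵀ * φ i
            = (∑ i ∈ Finset.range (m*(N+1)), (φ i)ᵀ * φ i)
              + ∑ i ∈ Finset.Icc (m*(N+1)) (m*(N+1)+N), (φ i)ᵀ * φ i := by
          rw [show (m+1)*(N+1) = (m*(N+1)+N)+1 from by ring]
          rw [Finset.range_eq_Ico,
            ← Finset.sum_Ico_consecutive _ (Nat.zero_le (m*(N+1))) (by omega),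
            Finset.Ico_add_one_right_eq_Icc, ← Finset.range_eq_Ico]
        rw [hsplit]
        have h3 := ih.add (hPE (m*(N+1))).1
        convert h3 using 1
        push_cast
        rw [add_mul, one_mul, add_smul]
        abel
    have hbound : ∀ k, N+1 ≤ k →
        ‖toEuclideanCLM (𝕜 := ℝ) (P k)‖ ≤ ((k/(N+1) : ℕ):ℝ)⁻¹ * α⁻¹ := by
      intro k hk
      have hm1 : 1 ≤ k/(N+1) := (Nat.one_le_div_iff (Nat.succ_pos N)).mpr hk
      have hmpos : (0:ℝ) < ((k/(N+1):ℕ):ℝ) := by exact_mod_cast hm1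
      have hc : 0 < ((k/(N+1):ℕ):ℝ) * α := mul_pos hmpos hα
      have hmk : (k/(N+1))*(N+1) ≤ k := Nat.div_mul_le_self k (N+1)
      have hpsd : ((P k)⁻¹ - (((k/(N+1):ℕ):ℝ)*α) • 1).PosSemidef := by
        have h1 := hchain ((k/(N+1))*(N+1)) k hmk
        have h2 : ((P ((k/(N+1))*(N+1)))⁻¹
            - ∑ i ∈ Finset.range ((k/(N+1))*(N+1)), (φ i)ᵀ * φ i).PosSemidef := by
          rw [hsum, add_sub_cancel_right]
          exact hR.posSemidef
        have h3 := (h1.add h2).add (hblock (k/(N+1)))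
        convert h3 using 1
        abel
      have h4 := norm_inv_le ((hPk k).inv) hc hpsd
      rwa [Matrix.nonsing_inv_nonsing_inv _ (hPdet k), mul_inv] at h4
    have hdiv : Filter.Tendsto (fun k : ℕ => k/(N+1)) Filter.atTop Filter.atTop := by
      apply Filter.tendsto_atTop_atTop.mpr
      intro b
      exact ⟨b*(N+1), fun a ha => (Nat.le_div_iff_mul_le (Nat.succ_pos N)).mpr ha⟩
    have h5 : Filter.Tendsto (fun k : ℕ => ((k/(N+1):ℕ):ℝ)⁻¹) Filter.atTop (nhds 0) :=
      tendsto_inv_atTop_zero.comp (tendsto_natCast_atTop_atTop.comp hdiv)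
    have hg : Filter.Tendsto (fun k : ℕ => ((k/(N+1):ℕ):ℝ)⁻¹ * α⁻¹ * ‖v‖)
        Filter.atTop (nhds 0) := by
      have h6 := h5.mul_const (α⁻¹ * ‖v‖)
      simpa [mul_assoc] using h6
    have hψt : Filter.Tendsto (fun k => (WithLp.equiv 2 ((Fin n) → ℝ)).symm (θt k))
        Filter.atTop (nhds 0) := by
      apply squeeze_zero_norm' _ hg
      refine Filter.eventually_atTop.mpr ⟨N+1, fun k hk => ?_⟩
      rw [hψ k]
      calc ‖toEuclideanCLM (𝕜 := ℝ) (P k) v‖ ≤ ‖toEuclideanCLM (𝕜 := ℝ) (P k)‖ * ‖v‖ :=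
            ContinuousLinearMap.le_opNorm _ _
      _ ≤ ((k/(N+1):ℕ):ℝ)⁻¹ * α⁻¹ * ‖v‖ :=
            mul_le_mul_of_nonneg_right (hbound k hk) (norm_nonneg v)
    have hfun : θt = fun k =>
        (WithLp.equiv 2 ((Fin n) → ℝ)) ((WithLp.equiv 2 ((Fin n) → ℝ)).symm (θt k)) :=
      funext fun k => (Equiv.apply_symm_apply _ _).symm
    rw [hfun]
    have hcont : Continuous (WithLp.equiv 2 ((Fin n) → ℝ)) := PiLp.continuous_ofLp 2 _
    have h7 := (hcont.tendsto 0).comp hψt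
    exact h7
  · -- bound
    intro k₀ k hk
    rw [sqrt_dot, sqrt_dot, hid k₀ k hk, ← mulVec_mulVec, ← clm_mulVec, ← clm_mulVec]
    calc ‖toEuclideanCLM (𝕜 := ℝ) (P k)
            (toEuclideanCLM (𝕜 := ℝ) ((P k₀)⁻¹) ((WithLp.equiv 2 _).symm (θt k₀)))‖
        ≤ ‖toEuclideanCLM (𝕜 := ℝ) (P k)‖ *
            ‖toEuclideanCLM (𝕜 := ℝ) ((P k₀)⁻¹) ((WithLp.equiv 2 _).symm (θt k₀))‖ :=
          ContinuousLinearMap.le_opNorm _ _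
    _ ≤ ‖toEuclideanCLM (𝕜 := ℝ) (P k)‖ *
          (‖toEuclideanCLM (𝕜 := ℝ) ((P k₀)⁻¹)‖ * ‖(WithLp.equiv 2 _).symm (θt k₀)‖) := by
        apply mul_le_mul_of_nonneg_left (ContinuousLinearMap.le_opNorm _ _) (norm_nonneg _)
    _ ≤ ‖toEuclideanCLM (𝕜 := ℝ) (P 0)‖ *
          (‖toEuclideanCLM (𝕜 := ℝ) ((P k₀)⁻¹)‖ * ‖(WithLp.equiv 2 _).symm (θt k₀)‖) := by
        apply mul_le_mul_of_nonneg_right (hPbound k)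
        positivity
    _ = ‖toEuclideanCLM (𝕜 := ℝ) (P 0)‖ * ‖toEuclideanCLM (𝕜 := ℝ) ((P k₀)⁻¹)‖ *
          ‖(WithLp.equiv 2 _).symm (θt k₀)‖ := by ring
end

section
/- Let P_0 ∈ ℝ^{n×n} be positive definite, let λ ∈ (0,1], let (φ_k)_{k=0}^∞ ⊂ ℝ^{p×n}, and let (P_k)_{k=0}^∞ satisfy the RLS covariance recursion P_{k+1}^{-1} = λ P_k^{-1} + φ_k^T φ_k. Then for every k ≥ 0, all eigenvalues of the matrix P_{k+1} φ_k^T φ_k are real and contained in the interval [0, 1]. -/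
open Matrix
open scoped ComplexOrder
open scoped MatrixOrder

/-- Mapping a real positive semidefinite matrix to `ℂ` preserves positive semidefiniteness. -/
lemma posSemidef_map_complex {n : ℕ} {M : Matrix (Fin n) (Fin n) ℝ} (hM : M.PosSemidef) :
    (M.map (algebraMap ℝ ℂ)).PosSemidef := by
  obtain ⟨B, hB⟩ : ∃ B : Matrix (Fin n) (Fin n) ℝ, M = Bᴴ * B := ⟨CFC.sqrt M, by
    rw [(CFC.sqrt_nonneg M).posSemidef.isHermitian.eq, CFC.sqrt_mul_sqrt_self M hM.nonneg]⟩
  rw [hB]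
  have hstar : ∀ a : ℝ, algebraMap ℝ ℂ (star a) = star (algebraMap ℝ ℂ a) := by
    intro a; simp [Complex.conj_ofReal]
  rw [Matrix.map_mul (f := algebraMap ℝ ℂ),
    Matrix.conjTranspose_map (algebraMap ℝ ℂ) hstar]
  exact posSemidef_conjTranspose_mul_self _

theorem stmt12 {n p : ℕ}
    (P : ℕ → Matrix (Fin n) (Fin n) ℝ) (hP0 : (P 0).PosDef) (hPk : ∀ k, (P k).PosDef)
    (lam : ℝ) (hlam : lam ∈ Set.Ioc (0 : ℝ) 1)
    (φ : ℕ → Matrix (Fin p) (Fin n) ℝ)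
    (hrec : ∀ k, (P (k + 1))⁻¹ = lam • (P k)⁻¹ + (φ k)ᵀ * φ k) :
    ∀ k, ∀ μ : ℂ,
      μ ∈ spectrum ℂ ((P (k + 1) * (φ k)ᵀ * φ k).map (algebraMap ℝ ℂ)) →
        μ.im = 0 ∧ 0 ≤ μ.re ∧ μ.re ≤ 1 := by
  intro k μ hμ
  set Q : Matrix (Fin n) (Fin n) ℝ := P (k + 1) with hQdef
  have hQ : Q.PosDef := hPk (k + 1)
  set A : Matrix (Fin n) (Fin n) ℝ := (φ k)ᵀ * φ k with hAdef
  have hA : A.PosSemidef := by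
    have := posSemidef_conjTranspose_mul_self (φ k)
    rwa [conjTranspose_eq_transpose_of_trivial] at this
  -- `Q⁻¹ - A` is positive semidefinite
  have hdiff : (Q⁻¹ - A).PosSemidef := by
    have h1 : Q⁻¹ - A = lam • (P k)⁻¹ := by
      rw [hrec k]; exact add_sub_cancel_right _ _
    rw [h1]
    have hinv : ((P k)⁻¹).PosDef := (hPk k).inv
    refine PosSemidef.of_dotProduct_mulVec_nonneg ?_ (fun x => ?_)
    · rw [Matrix.IsHermitian, conjTranspose_smul, star_trivial, hinv.isHermitian.eq]
    · 
      have := hinv.posSemidef.dotProduct_mulVec_nonneg x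
      rw [smul_mulVec, dotProduct_smul]
      exact smul_nonneg hlam.1.le this
  -- square root of `Q`
  set S : Matrix (Fin n) (Fin n) ℝ := CFC.sqrt Q with hSdef
  have hS : S.PosSemidef := (CFC.sqrt_nonneg Q).posSemidef
  have hSS : S * S = Q := CFC.sqrt_mul_sqrt_self Q hQ.posSemidef.nonneg
  set B : Matrix (Fin n) (Fin n) ℝ := S * A * S with hBdef
  have hB : B.PosSemidef := by
    have := hA.mul_mul_conjTranspose_same S
    rwa [hS.isHermitian.eq] at this
  -- `S` is invertible
  have hdetS : IsUnit S.det := by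
    have hdetQ : Q.det ≠ 0 := hQ.det_pos.ne'
    have : S.det * S.det = Q.det := by rw [← det_mul, hSS]
    exact isUnit_iff_ne_zero.mpr (fun h => hdetQ (by rw [← this, h, zero_mul]))
  -- `1 - B` is positive semidefinite
  have hSinv : S * S⁻¹ = 1 := mul_nonsing_inv S hdetS
  have hSinv' : S⁻¹ * S = 1 := nonsing_inv_mul S hdetS
  have hQinv : S * Q⁻¹ * S = 1 := by
    rw [← hSS, Matrix.mul_inv_rev]
    calc S * (S⁻¹ * S⁻¹) * S = (S * S⁻¹) * (S⁻¹ * S) := by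
          simp only [Matrix.mul_assoc]
      _ = 1 := by rw [hSinv, hSinv', one_mul]
  have h1B : (1 - B).PosSemidef := by
    have key : S * (Q⁻¹ - A) * S = 1 - B := by
      rw [Matrix.mul_sub, Matrix.sub_mul, hQinv, hBdef]
    have := hdiff.mul_mul_conjTranspose_same S
    rwa [hS.isHermitian.eq, key] at this
  -- complexify
  set f : ℝ →+* ℂ := algebraMap ℝ ℂ with hfdef
  set Sc := S.map f with hScdef
  set Ac := A.map f with hAcdef
  set Qc := Q.map f with hQcdef
  set Bc := B.map f with hBcdef
  have hScSc : Sc * Sc = Qc := by rw [hScdef, hQcdef, ← Matrix.map_mul, hSS]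
  have hBcEq : Bc = Sc * Ac * Sc := by
    rw [hBcdef, hBdef, Matrix.map_mul, Matrix.map_mul]
  have hdetSc : IsUnit Sc.det := by
    have : Sc.det = f S.det := by
      rw [hScdef, ← RingHom.mapMatrix_apply, ← RingHom.map_det]
    rw [this]
    exact hdetS.map f
  have hu : IsUnit Sc := (Matrix.isUnit_iff_isUnit_det Sc).mpr hdetSc
  obtain ⟨u, hu'⟩ := hu
  -- similarity
  have hconj : (Q * (φ k)ᵀ * φ k).map ⇑f
      = (u : Matrix (Fin n) (Fin n) ℂ) * Bc
        * ((u⁻¹ : (Matrix (Fin n) (Fin n) ℂ)ˣ) : Matrix (Fin n) (Fin n) ℂ) := by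
    rw [Matrix.coe_units_inv, hu']
    have h1 : (Q * (φ k)ᵀ * φ k) = Q * A := by
      rw [hAdef, Matrix.mul_assoc]
    rw [h1, Matrix.map_mul, hBcEq]
    have hScinv : Sc * Sc⁻¹ = 1 := mul_nonsing_inv Sc hdetSc
    calc Qc * Ac = (Sc * Sc) * Ac * (Sc * Sc⁻¹) := by rw [hScSc, hScinv, Matrix.mul_one]
      _ = Sc * (Sc * Ac * Sc) * Sc⁻¹ := by simp only [Matrix.mul_assoc]
  rw [hconj, spectrum.units_conjugate] at hμ
  -- eigenvector of `Bc`
  have hμ' : μ ∈ spectrum ℂ (Matrix.toLinAlgEquiv' (R := ℂ) (n := Fin n) Bc) := by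
    rwa [AlgEquiv.spectrum_eq (Matrix.toLinAlgEquiv' (R := ℂ) (n := Fin n)) Bc]
  have hev : Module.End.HasEigenvalue (Matrix.toLinAlgEquiv' (R := ℂ) (n := Fin n) Bc) μ :=
    Module.End.HasEigenvalue.of_mem_spectrum hμ'
  obtain ⟨v, hv⟩ := hev.exists_hasEigenvector
  have hvne : v ≠ 0 := hv.2
  have hBv : Bc *ᵥ v = μ • v := by
    have := hv.apply_eq_smul
    rwa [Matrix.toLinAlgEquiv'_apply] at this
  -- compute quadratic forms
  have hBcpsd : Bc.PosSemidef := posSemidef_map_complex hB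
  have h1Bcpsd : ((1 : Matrix (Fin n) (Fin n) ℂ) - Bc).PosSemidef := by
    have := posSemidef_map_complex h1B
    rwa [Matrix.map_sub _ (map_sub f), Matrix.map_one _ (map_zero f) (map_one f)] at this
  set c : ℂ := dotProduct (star v) v with hcdef
  have hcpos : 0 < c := dotProduct_star_self_pos_iff.mpr hvne
  have hcim : c.im = 0 := by
    have := Complex.lt_def.mp hcpos
    exact this.2.symm
  have hcre : 0 < c.re := (Complex.lt_def.mp hcpos).1
  have h1 : 0 ≤ μ * c := by
    have := hBcpsd.dotProduct_mulVec_nonneg v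
    rwa [hBv, dotProduct_smul, smul_eq_mul] at this
  have h2 : 0 ≤ (1 - μ) * c := by
    have h := h1Bcpsd.dotProduct_mulVec_nonneg v
    rw [Matrix.sub_mulVec, Matrix.one_mulVec, dotProduct_sub, hBv, dotProduct_smul,
      smul_eq_mul] at h
    have e : (1 - μ) * c = dotProduct (star v) v - μ * dotProduct (star v) v := by
      rw [hcdef]; ring
    rw [e]; exact h
  have h1' := Complex.le_def.mp h1
  have h2' := Complex.le_def.mp h2
  simp only [Complex.mul_re, Complex.mul_im, Complex.zero_re, Complex.zero_im, hcim,
    Complex.sub_re, Complex.sub_im, Complex.one_re, Complex.one_im] at h1' h2'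
  have him : μ.im = 0 := by
    have := h1'.2
    simp only [mul_zero, zero_sub, zero_add, mul_comm] at this ⊢
    nlinarith [hcre]
  refine ⟨him, ?_, ?_⟩
  · nlinarith [h1'.1, hcre, him]
  · nlinarith [h2'.1, hcre, him]
end

section
/- Let P_0 ∈ ℝ^{n×n} be positive definite, let λ ∈ (0,1], let (φ_k)_{k=0}^∞ ⊂ ℝ^{p×n} be persistently exciting, and let (P_k)_{k=0}^∞ satisfy the RLS covariance recursion P_{k+1}^{-1} = λ P_k^{-1} + φ_k^T φ_k. Define the ordered product 𝒜_k := (I_n − P_{k+1} φ_k^T φ_k)(I_n − P_k φ_{k−1}^T φ_{k−1}) ⋯ (I_n − P_1 φ_0^T φ_0). Then 𝒜_k → 0 as k → ∞. -/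
open Matrix Filter

private lemma aux13_dot_self_nonneg {m : ℕ} (x : Fin m → ℝ) : 0 ≤ x ⬝ᵥ x :=
  Finset.sum_nonneg fun i _ => mul_self_nonneg _

private lemma aux13_dot_sum {ι : Type*} {n : ℕ} (s : Finset ι) (f : ι → Matrix (Fin n) (Fin n) ℝ)
    (x : Fin n → ℝ) : x ⬝ᵥ ((∑ i ∈ s, f i) *ᵥ x) = ∑ i ∈ s, x ⬝ᵥ (f i *ᵥ x) := by
  classical
  induction s using Finset.cons_induction with
  | empty => simp [Matrix.zero_mulVec]
  | cons a s ha ih => simp [Finset.sum_insert ha, Matrix.add_mulVec, dotProduct_add, ih]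

private lemma aux13_cs {m : ℕ} (x y : Fin m → ℝ) :
    (x ⬝ᵥ y) * (x ⬝ᵥ y) ≤ (x ⬝ᵥ x) * (y ⬝ᵥ y) := by
  have h := Finset.sum_mul_sq_le_sq_mul_sq Finset.univ x y
  simp only [pow_two] at h
  simpa [dotProduct] using h

private lemma aux13_inv_qf {n : ℕ} {Q : Matrix (Fin n) (Fin n) ℝ} (hQ : Q.PosDef) {d : ℝ}
    (hd : 0 < d) (h : ∀ x : Fin n → ℝ, d * (x ⬝ᵥ x) ≤ x ⬝ᵥ (Q *ᵥ x)) (x : Fin n → ℝ) :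
    x ⬝ᵥ (Q⁻¹ *ᵥ x) ≤ d⁻¹ * (x ⬝ᵥ x) := by
  have hdet : IsUnit Q.det := isUnit_iff_ne_zero.mpr hQ.det_pos.ne'
  set y := Q⁻¹ *ᵥ x with hy
  have hQy : Q *ᵥ y = x := by
    rw [hy, Matrix.mulVec_mulVec, Matrix.mul_nonsing_inv _ hdet, Matrix.one_mulVec]
  have h1 : d * (y ⬝ᵥ y) ≤ x ⬝ᵥ y := by
    have := h y; rw [hQy] at this; rwa [dotProduct_comm y x] at this
  have ht0 : 0 ≤ x ⬝ᵥ y := by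
    have := hQ.inv.posSemidef.dotProduct_mulVec_nonneg x
    simpa [hy] using this
  have hcs : (x ⬝ᵥ y) * (x ⬝ᵥ y) ≤ (x ⬝ᵥ x) * (y ⬝ᵥ y) := aux13_cs x y
  have hxx : 0 ≤ x ⬝ᵥ x := aux13_dot_self_nonneg x
  rcases ht0.eq_or_lt with hteq | htpos
  · rw [← hteq]
    positivity
  · have h2 : d * ((x ⬝ᵥ y) * (x ⬝ᵥ y)) ≤ (x ⬝ᵥ x) * (x ⬝ᵥ y) := by
      nlinarith [mul_le_mul_of_nonneg_left hcs hd.le, mul_le_mul_of_nonneg_left h1 hxx]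
    rw [inv_mul_eq_div, le_div_iff₀ hd]
    nlinarith [h2, mul_pos htpos htpos]

private lemma aux13_entry {n : ℕ} {M : Matrix (Fin n) (Fin n) ℝ}
    (hsym : ∀ i j, M j i = M i j)
    (h0 : ∀ x : Fin n → ℝ, 0 ≤ x ⬝ᵥ (M *ᵥ x)) {c : ℝ}
    (h : ∀ x : Fin n → ℝ, x ⬝ᵥ (M *ᵥ x) ≤ c * (x ⬝ᵥ x)) (i j : Fin n) : |M i j| ≤ c := by
  classical
  have hqs : ∀ a b : Fin n, (Pi.single a (1:ℝ)) ⬝ᵥ (M *ᵥ Pi.single b 1) = M a b := by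
    intro a b
    simp [Matrix.mulVec_single, single_dotProduct, Pi.single_apply, eq_comm]
  have hss : ∀ a : Fin n, (Pi.single a (1:ℝ)) ⬝ᵥ (Pi.single a 1) = 1 := by
    intro a
    simp [single_dotProduct, Pi.single_apply]
  have hdiag_le : ∀ a, M a a ≤ c := by
    intro a
    have := h (Pi.single a 1)
    rw [hqs a a] at this
    simpa [hss a] using this
  have hdiag_ge : ∀ a, 0 ≤ M a a := by
    intro a
    have := h0 (Pi.single a 1)
    rwa [hqs a a] at this
  rcases eq_or_ne i j with rfl | hij
  · exact abs_le.mpr ⟨by linarith [hdiag_le i, hdiag_ge i], hdiag_le i⟩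
  · set e₁ : Fin n → ℝ := Pi.single i 1
    set e₂ : Fin n → ℝ := Pi.single j 1
    have e1 : (e₁ + e₂) ⬝ᵥ (M *ᵥ (e₁ + e₂)) = M i i + M j j + 2 * M i j := by
      simp only [e₁, e₂, Matrix.mulVec_add, dotProduct_add, add_dotProduct, hqs]
      rw [hsym i j]; ring
    have e2 : (e₁ - e₂) ⬝ᵥ (M *ᵥ (e₁ - e₂)) = M i i + M j j - 2 * M i j := by
      simp only [e₁, e₂, Matrix.mulVec_sub, dotProduct_sub, sub_dotProduct, hqs]
      rw [hsym i j]; ring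
    have q1 := h0 (e₁ + e₂)
    have q2 := h0 (e₁ - e₂)
    rw [e1] at q1
    rw [e2] at q2
    exact abs_le.mpr ⟨by linarith [hdiag_le i, hdiag_le j], by linarith [hdiag_le i, hdiag_le j]⟩

theorem stmt13 {n p : ℕ}
    (P : ℕ → Matrix (Fin n) (Fin n) ℝ) (hP0 : (P 0).PosDef) (hPk : ∀ k, (P k).PosDef)
    (lam : ℝ) (hlam : lam ∈ Set.Ioc (0 : ℝ) 1)
    (N : ℕ) (α β : ℝ) (hα : 0 < α) (hβ : 0 < β)
    (hN : (n : ℝ) ≤ (N : ℝ) * (p : ℝ))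
    (φ : ℕ → Matrix (Fin p) (Fin n) ℝ)
    (hPE : ∀ j : ℕ,
      ((∑ i ∈ Finset.Icc j (j + N), (φ i)ᵀ * φ i) -
        α • (1 : Matrix (Fin n) (Fin n) ℝ)).PosSemidef ∧
      (β • (1 : Matrix (Fin n) (Fin n) ℝ) -
        ∑ i ∈ Finset.Icc j (j + N), (φ i)ᵀ * φ i).PosSemidef)
    (hrec : ∀ k, (P (k + 1))⁻¹ = lam • (P k)⁻¹ + (φ k)ᵀ * φ k)
    (A : ℕ → Matrix (Fin n) (Fin n) ℝ)
    (hA0 : A 0 = (1 : Matrix (Fin n) (Fin n) ℝ) - P 1 * (φ 0)ᵀ * φ 0)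
    (hArec : ∀ k, A (k + 1) =
      ((1 : Matrix (Fin n) (Fin n) ℝ) - P (k + 2) * (φ (k + 1))ᵀ * φ (k + 1)) * A k) :
    Filter.Tendsto A Filter.atTop (nhds 0) := by
  obtain ⟨hlam0, hlam1⟩ := hlam
  have hdetu : ∀ k, IsUnit (P k).det := fun k => isUnit_iff_ne_zero.mpr (hPk k).det_pos.ne'
  -- closed form for A
  have hkey : ∀ k, (1 : Matrix (Fin n) (Fin n) ℝ) - P (k+1) * (φ k)ᵀ * φ k
      = lam • (P (k+1) * (P k)⁻¹) := by
    intro k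
    have h1 : P (k+1) * (P (k+1))⁻¹ = 1 := Matrix.mul_nonsing_inv _ (hdetu (k+1))
    calc (1 : Matrix (Fin n) (Fin n) ℝ) - P (k+1) * (φ k)ᵀ * φ k
        = P (k+1) * ((P (k+1))⁻¹ - (φ k)ᵀ * φ k) := by
          rw [Matrix.mul_sub, h1, Matrix.mul_assoc]
      _ = P (k+1) * (lam • (P k)⁻¹) := by rw [hrec k, add_sub_cancel_right]
      _ = lam • (P (k+1) * (P k)⁻¹) := by rw [Matrix.mul_smul]
  have hA : ∀ k, A k = lam ^ (k+1) • (P (k+1) * (P 0)⁻¹) := by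
    intro k
    induction k with
    | zero => rw [hA0, hkey 0, pow_one]
    | succ k ih =>
      have h2 : (P (k+1))⁻¹ * P (k+1) = 1 := Matrix.nonsing_inv_mul _ (hdetu (k+1))
      rw [hArec k, hkey (k+1), ih, smul_mul_smul_comm, ← pow_succ']
      congr 1
      rw [Matrix.mul_assoc, ← Matrix.mul_assoc ((P (k+1))⁻¹) (P (k+1)) ((P 0)⁻¹), h2,
        Matrix.one_mul]
  -- quadratic form facts
  have hq0 : ∀ t (x : Fin n → ℝ), 0 ≤ x ⬝ᵥ (((φ t)ᵀ * φ t) *ᵥ x) := by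
    intro t x
    have heq : x ⬝ᵥ (((φ t)ᵀ * φ t) *ᵥ x) = (φ t *ᵥ x) ⬝ᵥ (φ t *ᵥ x) := by
      rw [← Matrix.mulVec_mulVec, Matrix.dotProduct_mulVec, Matrix.vecMul_transpose]
    rw [heq]
    exact aux13_dot_self_nonneg _
  have hqinv0 : ∀ k (x : Fin n → ℝ), 0 ≤ x ⬝ᵥ ((P k)⁻¹ *ᵥ x) := fun k x => by
    simpa using (hPk k).inv.posSemidef.dotProduct_mulVec_nonneg x
  -- expansion of the inverse
  have hexp : ∀ (j m : ℕ), (P (j + m))⁻¹ = lam ^ m • (P j)⁻¹ +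
      ∑ i ∈ Finset.range m, lam ^ (m - 1 - i) • ((φ (j + i))ᵀ * φ (j + i)) := by
    intro j m
    induction m with
    | zero => simp
    | succ m ih =>
      rw [show j + (m + 1) = (j + m) + 1 from rfl, hrec (j + m), ih]
      rw [smul_add, smul_smul, ← pow_succ', Finset.smul_sum, Finset.sum_range_succ]
      have h1 : ∀ i ∈ Finset.range m,
          lam • (lam ^ (m - 1 - i) • ((φ (j + i))ᵀ * φ (j + i)))
            = lam ^ (m + 1 - 1 - i) • ((φ (j + i))ᵀ * φ (j + i)) := by
        intro i hi
        simp only [Finset.mem_range] at hi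
        have hie : m - 1 - i + 1 = m + 1 - 1 - i := by omega
        rw [smul_smul, ← pow_succ', hie]
      rw [Finset.sum_congr rfl h1]
      have h2 : (m + 1 - 1 - m) = 0 := by omega
      rw [h2, pow_zero, one_smul]
      abel
  -- PE in quadratic form, reindexed
  have hPEq : ∀ j (x : Fin n → ℝ), α * (x ⬝ᵥ x) ≤
      ∑ i ∈ Finset.range (N+1), x ⬝ᵥ (((φ (j + i))ᵀ * φ (j + i)) *ᵥ x) := by
    intro j x
    have h1 := (hPE j).1.dotProduct_mulVec_nonneg x
    simp only [Matrix.sub_mulVec, dotProduct_sub, Matrix.smul_mulVec,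
      Matrix.one_mulVec, dotProduct_smul, smul_eq_mul, star_trivial, sub_nonneg] at h1
    have h2 : x ⬝ᵥ ((∑ i ∈ Finset.Icc j (j + N), (φ i)ᵀ * φ i) *ᵥ x)
        = ∑ i ∈ Finset.range (N+1), x ⬝ᵥ (((φ (j + i))ᵀ * φ (j + i)) *ᵥ x) := by
      rw [aux13_dot_sum]
      rw [show Finset.Icc j (j + N) = Finset.Ico j (j + N + 1) by rw [Finset.Ico_add_one_right_eq_Icc]]
      rw [Finset.sum_Ico_eq_sum_range]
      have he : j + N + 1 - j = N + 1 := by omega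
      rw [he]
    rw [← h2]
    exact h1
  -- window bound
  have hwin : ∀ j (x : Fin n → ℝ),
      lam ^ (N+1) * (x ⬝ᵥ ((P j)⁻¹ *ᵥ x)) + lam ^ N * (α * (x ⬝ᵥ x))
        ≤ x ⬝ᵥ ((P (j + (N+1)))⁻¹ *ᵥ x) := by
    intro j x
    rw [hexp j (N+1), Matrix.add_mulVec, dotProduct_add, Matrix.smul_mulVec,
      dotProduct_smul, smul_eq_mul]
    have hsum : x ⬝ᵥ ((∑ i ∈ Finset.range (N+1),
          lam ^ (N + 1 - 1 - i) • ((φ (j + i))ᵀ * φ (j + i))) *ᵥ x)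
        = ∑ i ∈ Finset.range (N+1),
            lam ^ (N - i) * (x ⬝ᵥ (((φ (j + i))ᵀ * φ (j + i)) *ᵥ x)) := by
      rw [aux13_dot_sum]
      refine Finset.sum_congr rfl fun i hi => ?_
      have hie : N + 1 - 1 - i = N - i := by omega
      rw [Matrix.smul_mulVec, dotProduct_smul, smul_eq_mul, hie]
    rw [hsum]
    have hterm : ∀ i ∈ Finset.range (N+1),
        lam ^ N * (x ⬝ᵥ (((φ (j + i))ᵀ * φ (j + i)) *ᵥ x))
          ≤ lam ^ (N - i) * (x ⬝ᵥ (((φ (j + i))ᵀ * φ (j + i)) *ᵥ x)) := by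
      intro i hi
      exact mul_le_mul_of_nonneg_right
        (pow_le_pow_of_le_one hlam0.le hlam1 (by omega)) (hq0 _ x)
    have hchain : lam ^ N * (α * (x ⬝ᵥ x)) ≤
        ∑ i ∈ Finset.range (N+1), lam ^ (N - i) * (x ⬝ᵥ (((φ (j + i))ᵀ * φ (j + i)) *ᵥ x)) := by
      calc lam ^ N * (α * (x ⬝ᵥ x))
          ≤ lam ^ N * ∑ i ∈ Finset.range (N+1), x ⬝ᵥ (((φ (j + i))ᵀ * φ (j + i)) *ᵥ x) :=
            mul_le_mul_of_nonneg_left (hPEq j x) (pow_nonneg hlam0.le N)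
        _ = ∑ i ∈ Finset.range (N+1), lam ^ N * (x ⬝ᵥ (((φ (j + i))ᵀ * φ (j + i)) *ᵥ x)) :=
            Finset.mul_sum _ _ _
        _ ≤ _ := Finset.sum_le_sum hterm
    linarith
  -- entrywise convergence of lam^(k+1) * P (k+1)
  have hEnt : ∀ (i l : Fin n),
      Tendsto (fun k => lam ^ (k+1) * P (k+1) i l) atTop (nhds 0) := by
    have hsymP : ∀ k (a b : Fin n), P k b a = P k a b := by
      intro k a b
      have := (hPk k).isHermitian.apply a b
      simpa using this
    have hP0q : ∀ k (x : Fin n → ℝ), 0 ≤ x ⬝ᵥ (P k *ᵥ x) := fun k x => by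
      simpa using (hPk k).posSemidef.dotProduct_mulVec_nonneg x
    rcases eq_or_lt_of_le hlam1 with heq | hlt
    · -- lam = 1
      subst heq
      have hwin1 : ∀ j (x : Fin n → ℝ),
          x ⬝ᵥ ((P j)⁻¹ *ᵥ x) + α * (x ⬝ᵥ x) ≤ x ⬝ᵥ ((P (j + (N+1)))⁻¹ *ᵥ x) := by
        intro j x
        have := hwin j x
        simpa using this
      have hmono : ∀ j m (x : Fin n → ℝ),
          x ⬝ᵥ ((P j)⁻¹ *ᵥ x) ≤ x ⬝ᵥ ((P (j + m))⁻¹ *ᵥ x) := by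
        intro j m x
        rw [hexp j m]
        simp only [one_pow, one_smul, Matrix.add_mulVec, dotProduct_add]
        have h3 : 0 ≤ x ⬝ᵥ ((∑ i ∈ Finset.range m, (φ (j + i))ᵀ * φ (j + i)) *ᵥ x) := by
          rw [aux13_dot_sum]
          exact Finset.sum_nonneg fun i _ => hq0 (j + i) x
        linarith
      have hlow1 : ∀ (m : ℕ) (x : Fin n → ℝ),
          (m : ℝ) * α * (x ⬝ᵥ x) ≤ x ⬝ᵥ ((P (m * (N+1)))⁻¹ *ᵥ x) := by
        intro m
        induction m with
        | zero => intro x; simpa using hqinv0 0 x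
        | succ m ih =>
          intro x
          have h1 := hwin1 (m * (N+1)) x
          have h2 := ih x
          rw [Nat.succ_mul]
          push_cast
          linarith
      have hlowk : ∀ k (x : Fin n → ℝ),
          ((k / (N+1) : ℕ) : ℝ) * α * (x ⬝ᵥ x) ≤ x ⬝ᵥ ((P k)⁻¹ *ᵥ x) := by
        intro k x
        have h1 := hlow1 (k / (N+1)) x
        have h2 := hmono ((k / (N+1)) * (N+1)) (k - (k / (N+1)) * (N+1)) x
        have h3 : (k / (N+1)) * (N+1) + (k - (k / (N+1)) * (N+1)) = k :=
          Nat.add_sub_cancel' (Nat.div_mul_le_self k (N+1))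
        rw [h3] at h2
        linarith
      have hBnd1 : ∀ k, 1 ≤ k / (N+1) → ∀ i l,
          |P k i l| ≤ (((k / (N+1) : ℕ) : ℝ) * α)⁻¹ := by
        intro k hk i l
        have hdpos : 0 < ((k / (N+1) : ℕ) : ℝ) * α := by
          apply mul_pos _ hα
          exact_mod_cast Nat.lt_of_lt_of_le Nat.zero_lt_one hk
        have hq := aux13_inv_qf (hPk k).inv hdpos (fun x => hlowk k x) 
        rw [Matrix.nonsing_inv_nonsing_inv _ (hdetu k)] at hq
        exact aux13_entry (hsymP k) (hP0q k) hq i l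
      intro i l
      simp only [one_pow, one_mul]
      apply squeeze_zero_norm' (a := fun k => ((((k+1) / (N+1) : ℕ) : ℝ) * α)⁻¹)
      · filter_upwards [eventually_ge_atTop N] with k hk
        have h1 : 1 ≤ (k+1) / (N+1) := (Nat.one_le_div_iff (show 0 < N + 1 by omega)).mpr (by omega)
        simpa [Real.norm_eq_abs] using hBnd1 (k+1) h1 i l
      · have hdiv : Tendsto (fun k : ℕ => (k+1) / (N+1)) atTop atTop := by
          apply tendsto_atTop_atTop.mpr
          intro b
          refine ⟨b * (N+1), fun k hk => ?_⟩
          exact (Nat.le_div_iff_mul_le (show 0 < N + 1 by omega)).mpr (by omega)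
        have hc : Tendsto (fun m : ℕ => ((m : ℝ) * α)⁻¹) atTop (nhds 0) := by
          apply Filter.Tendsto.inv_tendsto_atTop
          exact Filter.Tendsto.atTop_mul_const hα tendsto_natCast_atTop_atTop
        exact hc.comp hdiv
    · -- lam < 1
      have hd : 0 < lam ^ N * α := mul_pos (pow_pos hlam0 N) hα
      have hlow : ∀ j (x : Fin n → ℝ),
          (lam ^ N * α) * (x ⬝ᵥ x) ≤ x ⬝ᵥ ((P (j + (N+1)))⁻¹ *ᵥ x) := by
        intro j x
        have h1 := hwin j x
        have h2 : 0 ≤ lam ^ (N+1) * (x ⬝ᵥ ((P j)⁻¹ *ᵥ x)) :=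
          mul_nonneg (pow_nonneg hlam0.le _) (hqinv0 j x)
        nlinarith
      have hBnd : ∀ j (i l : Fin n), |P (j + (N+1)) i l| ≤ (lam ^ N * α)⁻¹ := by
        intro j i l
        have hq := aux13_inv_qf (hPk (j + (N+1))).inv hd (fun x => hlow j x)
        rw [Matrix.nonsing_inv_nonsing_inv _ (hdetu (j + (N+1)))] at hq
        exact aux13_entry (hsymP _) (hP0q _) hq i l
      intro i l
      apply squeeze_zero_norm' (a := fun k => ((lam ^ N * α)⁻¹ * lam) * lam ^ k)
      · filter_upwards [eventually_ge_atTop N] with k hk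
        have h2 : |P (k+1) i l| ≤ (lam ^ N * α)⁻¹ := by
          have := hBnd (k - N) i l
          rwa [show k - N + (N+1) = k + 1 by omega] at this
        have h3 : ‖lam ^ (k+1) * P (k+1) i l‖ = lam ^ (k+1) * |P (k+1) i l| := by
          rw [Real.norm_eq_abs, abs_mul, abs_of_nonneg (pow_nonneg hlam0.le _)]
        rw [h3]
        calc lam ^ (k+1) * |P (k+1) i l| ≤ lam ^ (k+1) * (lam ^ N * α)⁻¹ :=
              mul_le_mul_of_nonneg_left h2 (pow_nonneg hlam0.le _)
          _ = ((lam ^ N * α)⁻¹ * lam) * lam ^ k := by ring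
      · have := (tendsto_pow_atTop_nhds_zero_of_lt_one hlam0.le hlt).const_mul
          ((lam ^ N * α)⁻¹ * lam)
        simpa using this
  -- assemble
  have hAij : ∀ i j, Tendsto (fun k => A k i j) atTop (nhds 0) := by
    intro i j
    have heq : (fun k => A k i j)
        = fun k => ∑ l, (lam ^ (k+1) * P (k+1) i l) * (P 0)⁻¹ l j := by
      funext k
      rw [hA k]
      simp [Matrix.smul_apply, Matrix.mul_apply, Finset.mul_sum, mul_assoc, smul_eq_mul]
    rw [heq]
    have := tendsto_finset_sum (Finset.univ : Finset (Fin n))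
      (fun l _ => (hEnt i l).mul_const ((P 0)⁻¹ l j))
    simpa using this
  exact tendsto_pi_nhds.mpr fun i => tendsto_pi_nhds.mpr fun j => by simpa using hAij i j
end
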